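/- arXiv:2407.02372 — 6 statements merged into one kernel-verified Lean document; each statement's English description precedes it below -/
import Mathlib

section
/- For all nonnegative integers a and b, a! · b! ≥ (⌊(a+b)/2⌋!)². -/
theorem factorial_mul_factorial_ge_sq_half_factorial (a b : ℕ) :
    (Nat.factorial ((a + b) / 2)) ^ 2 ≤ Nat.factorial a * Nat.factorial b := by
  set n := a + b with hn
  set m := n / 2 with hm
  have hmn : m ≤ n := Nat.div_le_self n 2
  have hmm : m ≤ n - m := by omega
  have h1 : Nat.choose n a * (Nat.factorial a * Nat.factorial b) = Nat.factorial n := by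
    have := Nat.choose_mul_factorial_mul_factorial (Nat.le_add_right a b)
    have hb : a + b - a = b := by omega
    rw [hb] at this
    rw [← this]; ring
  have h2 : Nat.choose n m * (Nat.factorial m * Nat.factorial (n - m)) = Nat.factorial n := by
    have := Nat.choose_mul_factorial_mul_factorial hmn
    rw [← this]; ring
  have hle : Nat.choose n a ≤ Nat.choose n m := Nat.choose_le_middle a n
  have hpos : 0 < Nat.choose n a := Nat.choose_pos (Nat.le_add_right a b)
  have key : Nat.factorial m * Nat.factorial (n - m) ≤ Nat.factorial a * Nat.factorial b := by
    by_contra h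
    push_neg at h
    have : Nat.factorial n < Nat.factorial n := by
      calc Nat.factorial n = Nat.choose n a * (Nat.factorial a * Nat.factorial b) := h1.symm
        _ < Nat.choose n m * (Nat.factorial m * Nat.factorial (n - m)) := by
            exact Nat.mul_lt_mul_of_le_of_lt hle h (Nat.lt_of_lt_of_le hpos hle)
        _ = Nat.factorial n := h2
    omega
  calc Nat.factorial m ^ 2 = Nat.factorial m * Nat.factorial m := sq _
    _ ≤ Nat.factorial m * Nat.factorial (n - m) :=
        Nat.mul_le_mul_left _ (Nat.factorial_le hmm)
    _ ≤ _ := key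
end

section
/- Let n ≥ 1 and let a, b ∈ ℝⁿ with all entries a_i, b_j ∈ (0,1). Then the determinant of the matrix with entries 1/(1 + a_i b_j) equals (∏_{1≤i<j≤n} (a_j - a_i)(b_i - b_j)) / (∏_{i,j∈[n]} (1 + a_i b_j)). -/
open Finset Matrix

theorem cauchy_det : ∀ (n : ℕ) (x y : Fin n → ℝ), (∀ i j, x i + y j ≠ 0) →
    Matrix.det (Matrix.of fun i j : Fin n => 1 / (x i + y j)) =
      (∏ i : Fin n, ∏ j ∈ Finset.Ioi i, (x j - x i) * (y j - y i)) /
        ∏ i : Fin n, ∏ j : Fin n, (x i + y j) := by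
  intro n
  induction n with
  | zero => intro x y h; simp
  | succ n ih =>
    intro x y h
    set M : Matrix (Fin (n+1)) (Fin (n+1)) ℝ := Matrix.of fun i j => 1 / (x i + y j) with hM
    set E : Matrix (Fin (n+1)) (Fin (n+1)) ℝ :=
      Matrix.of fun k j => if k = j then 1 else if k = 0 then (-1:ℝ) else 0 with hE
    have hdetE : E.det = 1 := by
      rw [Matrix.det_of_upperTriangular]
      · simp [hE]
      · intro i j hij
        have hij' : j < i := hij
        simp only [hE, Matrix.of_apply]
        rw [if_neg (ne_of_gt hij'), if_neg (ne_of_gt (lt_of_le_of_lt (Fin.zero_le j) hij'))]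
    set C1 : Matrix (Fin (n+1)) (Fin (n+1)) ℝ :=
      Matrix.of fun i j => if j = 0 then (1:ℝ) else 1 / (x i + y j) with hC1
    have hME : M * E = Matrix.of fun i j =>
        (1 / (x i + y 0)) * ((if j = 0 then 1 else y 0 - y j) * C1 i j) := by
      ext i j
      rw [Matrix.mul_apply]
      rcases eq_or_ne j 0 with rfl | hj
      · rw [Finset.sum_eq_single 0]
        · simp [hM, hE, hC1]
        · intro k _ hk; simp [hM, hE, hk]
        · simp
      · have : ∀ k, M i k * E k j = (if k = j then M i j else 0) + (if k = 0 then -M i 0 else 0) := by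
          intro k
          simp only [hE, Matrix.of_apply]
          rcases eq_or_ne k j with rfl | hkj
          · rw [if_pos rfl, if_pos rfl, if_neg hj]
            simp
          · rw [if_neg hkj, if_neg hkj]
            rcases eq_or_ne k 0 with rfl | hk0
            · simp
            · simp [hk0]
        simp only [this, Finset.sum_add_distrib, Finset.sum_ite_eq', Finset.mem_univ, if_true]
        simp only [hM, hC1, Matrix.of_apply, if_neg hj]
        have h1 := h i j
        have h2 := h i 0
        field_simp
        ring
    set F : Matrix (Fin (n+1)) (Fin (n+1)) ℝ :=
      Matrix.of fun i k => if i = k then 1 else if k = 0 then (-1:ℝ) else 0 with hF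
    have hdetF : F.det = 1 := by
      rw [Matrix.det_of_lowerTriangular]
      · simp [hF]
      · intro i j hij
        have hij' : i < j := hij
        simp only [hF, Matrix.of_apply]
        rw [if_neg (ne_of_lt hij'), if_neg (ne_of_gt (lt_of_le_of_lt (Fin.zero_le i) hij'))]
    set C2 : Matrix (Fin (n+1)) (Fin (n+1)) ℝ := Matrix.of fun i j =>
      if i = 0 then C1 0 j else if j = 0 then 0
        else (x 0 - x i) / ((x i + y j) * (x 0 + y j)) with hC2
    have hFC : F * C1 = C2 := by
      ext i j
      rw [Matrix.mul_apply]
      rcases eq_or_ne i 0 with rfl | hi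
      · rw [Finset.sum_eq_single 0]
        · simp [hF, hC2]
        · intro k _ hk; simp [hF, Ne.symm hk, hk]
        · simp
      · have : ∀ k, F i k * C1 k j = (if k = i then C1 i j else 0) + (if k = 0 then -C1 0 j else 0) := by
          intro k
          simp only [hF, Matrix.of_apply]
          rcases eq_or_ne k i with rfl | hki
          · rw [if_pos rfl, if_pos rfl, if_neg hi]
            simp
          · rw [if_neg hki, if_neg (Ne.symm hki)]
            rcases eq_or_ne k 0 with rfl | hk0
            · simp
            · simp [hk0]
        simp only [this, Finset.sum_add_distrib, Finset.sum_ite_eq', Finset.mem_univ, if_true]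
        simp only [hC1, hC2, Matrix.of_apply, if_neg hi]
        rcases eq_or_ne j 0 with rfl | hj
        · simp
        · rw [if_neg hj, if_neg hj, if_neg hj]
          have h1 := h i j
          have h2 := h 0 j
          field_simp
          ring
    have hdetC2 : C2.det = (∏ i : Fin n, (x 0 - x i.succ)) *
        ((∏ j : Fin n, (1 / (x 0 + y j.succ))) *
          (Matrix.of fun i j : Fin n => 1 / (x (Fin.succ i) + y (Fin.succ j))).det) := by
      rw [Matrix.det_succ_column_zero, Finset.sum_eq_single 0]
      · have hsub : C2.submatrix (Fin.succAbove 0) Fin.succ =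
            Matrix.of fun i j : Fin n => (x 0 - x i.succ) *
              ((1 / (x 0 + y j.succ)) * (1 / (x i.succ + y j.succ))) := by
          ext i j
          simp only [Matrix.submatrix_apply, Fin.succAbove_zero, hC2, Matrix.of_apply,
            if_neg (Fin.succ_ne_zero i), if_neg (Fin.succ_ne_zero j)]
          rw [div_eq_mul_inv, mul_inv, one_div, one_div]
          ring
        rw [hsub, Matrix.det_mul_column (fun i : Fin n => x 0 - x i.succ)
            (fun i j : Fin n => 1 / (x 0 + y j.succ) * (1 / (x i.succ + y j.succ))),
          show (fun i j : Fin n => 1 / (x 0 + y j.succ) * (1 / (x i.succ + y j.succ))) =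
            Matrix.of fun i j : Fin n => 1 / (x 0 + y j.succ) * (1 / (x i.succ + y j.succ)) from rfl,
          Matrix.det_mul_row (fun j : Fin n => 1 / (x 0 + y j.succ))
            (fun i j : Fin n => 1 / (x i.succ + y j.succ))]
        have h00 : C2 0 0 = 1 := by simp [hC2, hC1]
        rw [h00]
        norm_num
        exact Or.inl (Or.inl rfl)
      · intro i _ hi
        simp [hC2, hC1, if_neg hi]
      · simp
    have hdetM : M.det = (∏ i : Fin (n+1), (1 / (x i + y 0))) *
        ((∏ j : Fin n, (y 0 - y j.succ)) * C1.det) := by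
      calc M.det = (M * E).det := by rw [Matrix.det_mul, hdetE, mul_one]
        _ = (∏ i : Fin (n+1), (1 / (x i + y 0))) *
            ((∏ j : Fin (n+1), (if j = 0 then 1 else y 0 - y j)) * C1.det) := by
          rw [hME, Matrix.det_mul_column (fun i => 1 / (x i + y 0))
            (fun i j => (if j = 0 then (1:ℝ) else y 0 - y j) * C1 i j),
            show (fun i j : Fin (n+1) => (if j = 0 then (1:ℝ) else y 0 - y j) * C1 i j) =
              Matrix.of fun i j : Fin (n+1) => (if j = 0 then (1:ℝ) else y 0 - y j) * C1 i j from rfl,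
            Matrix.det_mul_row]
        _ = _ := by
          congr 2
          rw [Fin.prod_univ_succ]
          simp [Fin.succ_ne_zero]
    have hC1C2 : C1.det = C2.det := by rw [← hFC, Matrix.det_mul, hdetF, one_mul]
    have hsmall : (Matrix.of fun i j : Fin n => 1 / (x (Fin.succ i) + y (Fin.succ j))).det =
        (∏ i : Fin n, ∏ j ∈ Finset.Ioi i, (x j.succ - x i.succ) * (y j.succ - y i.succ)) /
          ∏ i : Fin n, ∏ j : Fin n, (x i.succ + y j.succ) :=
      ih (fun i => x i.succ) (fun j => y j.succ) (fun i j => h i.succ j.succ)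
    rw [hdetM, hC1C2, hdetC2, hsmall]
    -- now pure algebra
    have hA : (∏ i : Fin (n+1), (x i + y 0)) ≠ 0 :=
      Finset.prod_ne_zero_iff.2 fun i _ => h i 0
    have hB : (∏ j : Fin n, (x 0 + y j.succ)) ≠ 0 :=
      Finset.prod_ne_zero_iff.2 fun j _ => h 0 j.succ
    have hDs : (∏ i : Fin n, ∏ j : Fin n, (x i.succ + y j.succ)) ≠ 0 :=
      Finset.prod_ne_zero_iff.2 fun i _ => Finset.prod_ne_zero_iff.2 fun j _ => h i.succ j.succ
    have hNum : (∏ i : Fin (n+1), ∏ j ∈ Finset.Ioi i, (x j - x i) * (y j - y i)) =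
        ((∏ i : Fin n, (x 0 - x i.succ)) * (∏ j : Fin n, (y 0 - y j.succ))) *
          (∏ i : Fin n, ∏ j ∈ Finset.Ioi i, (x j.succ - x i.succ) * (y j.succ - y i.succ)) := by
      rw [Fin.prod_univ_succ, Fin.prod_Ioi_zero]
      congr 1
      · rw [← Finset.prod_mul_distrib]
        exact Finset.prod_congr rfl fun j _ => by ring
      · exact Finset.prod_congr rfl fun i _ => Fin.prod_Ioi_succ (fun j => (x j - x i.succ) * (y j - y i.succ)) i
    have hDen : (∏ i : Fin (n+1), ∏ j : Fin (n+1), (x i + y j)) =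
        (∏ i : Fin (n+1), (x i + y 0)) * ((∏ j : Fin n, (x 0 + y j.succ)) *
          ∏ i : Fin n, ∏ j : Fin n, (x i.succ + y j.succ)) := by
      calc ∏ i : Fin (n+1), ∏ j : Fin (n+1), (x i + y j)
          = ∏ i : Fin (n+1), ((x i + y 0) * ∏ j : Fin n, (x i + y j.succ)) :=
            Finset.prod_congr rfl fun i _ => Fin.prod_univ_succ _
        _ = (∏ i : Fin (n+1), (x i + y 0)) * ∏ i : Fin (n+1), ∏ j : Fin n, (x i + y j.succ) :=
            Finset.prod_mul_distrib
        _ = _ := by rw [Fin.prod_univ_succ (fun i => ∏ j : Fin n, (x i + y j.succ))]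
    rw [hNum, hDen]
    simp only [one_div, Finset.prod_inv_distrib]
    field_simp


theorem scaled_cauchy_determinant (n : ℕ) (hn : 1 ≤ n) (a b : Fin n → ℝ)
    (ha : ∀ i, a i ∈ Set.Ioo (0 : ℝ) 1) (hb : ∀ j, b j ∈ Set.Ioo (0 : ℝ) 1) :
    Matrix.det (Matrix.of fun i j : Fin n => 1 / (1 + a i * b j)) =
      (∏ i : Fin n, ∏ j ∈ Finset.Ioi i, (a j - a i) * (b i - b j)) /
        ∏ i : Fin n, ∏ j : Fin n, (1 + a i * b j) := by
  obtain ⟨m, rfl⟩ : ∃ m, n = m + 1 := ⟨n - 1, (Nat.succ_pred_eq_of_pos hn).symm⟩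
  have hapos : ∀ i, 0 < a i := fun i => (ha i).1
  have hbpos : ∀ j, 0 < b j := fun j => (hb j).1
  have hane : ∀ i, a i ≠ 0 := fun i => (hapos i).ne'
  set x : Fin (m+1) → ℝ := fun i => (a i)⁻¹ with hx
  have hxy : ∀ i j, x i + b j ≠ 0 := fun i j =>
    (add_pos (inv_pos.2 (hapos i)) (hbpos j)).ne'
  have key : (Matrix.of fun i j : Fin (m+1) => 1 / (1 + a i * b j)) =
      Matrix.of fun i j : Fin (m+1) => (a i)⁻¹ * (1 / (x i + b j)) := by
    ext i j
    simp only [Matrix.of_apply, hx]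
    have h1 := hane i
    have h2 := hxy i j
    have h3 : (1:ℝ) + a i * b j ≠ 0 := (add_pos one_pos (mul_pos (hapos i) (hbpos j))).ne'
    field_simp
  rw [key, Matrix.det_mul_column (fun i => (a i)⁻¹) (fun i j => 1 / (x i + b j)),
    show (fun i j : Fin (m+1) => 1 / (x i + b j)) =
      Matrix.of fun i j : Fin (m+1) => 1 / (x i + b j) from rfl,
    cauchy_det (m+1) x b hxy]
  -- rewrite numerator
  have hnum : (∏ i : Fin (m+1), ∏ j ∈ Finset.Ioi i, (x j - x i) * (b j - b i)) =
      (∏ i : Fin (m+1), ∏ j ∈ Finset.Ioi i, (a j - a i) * (b i - b j)) /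
        ∏ i : Fin (m+1), ∏ j ∈ Finset.Ioi i, (a i * a j) := by
    rw [← Finset.prod_div_distrib]
    refine Finset.prod_congr rfl fun i _ => ?_
    rw [← Finset.prod_div_distrib]
    refine Finset.prod_congr rfl fun j _ => ?_
    simp only [hx]
    have h1 := hane i
    have h2 := hane j
    field_simp
    ring
  have hP : (∏ i : Fin (m+1), ∏ j ∈ Finset.Ioi i, (a i * a j)) = (∏ i : Fin (m+1), a i) ^ (m + 1 - 1) := by
    calc ∏ i : Fin (m+1), ∏ j ∈ Finset.Ioi i, (a i * a j)
        = (∏ i : Fin (m+1), ∏ j ∈ Finset.Ioi i, a i) * ∏ i : Fin (m+1), ∏ j ∈ Finset.Ioi i, a j := by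
          rw [← Finset.prod_mul_distrib]
          exact Finset.prod_congr rfl fun i _ => by rw [Finset.prod_mul_distrib]
      _ = (∏ i : Fin (m+1), a i ^ (m + 1 - 1 - (i : ℕ))) * ∏ j : Fin (m+1), a j ^ (j : ℕ) := by
          congr 1
          · exact Finset.prod_congr rfl fun i _ => by
              rw [Finset.prod_const, Fin.card_Ioi]
          · rw [Finset.prod_comm' (t' := (Finset.univ : Finset (Fin (m+1))))
              (s' := fun j => Finset.Iio j)
              (fun i j => by simp [Finset.mem_Ioi, Finset.mem_Iio, and_comm])]
            exact Finset.prod_congr rfl fun j _ => by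
              rw [Finset.prod_const, Fin.card_Iio]
      _ = ∏ i : Fin (m+1), a i ^ (m + 1 - 1) := by
          rw [← Finset.prod_mul_distrib]
          refine Finset.prod_congr rfl fun i _ => ?_
          rw [← pow_add]
          congr 1
          have := i.isLt
          omega
      _ = (∏ i : Fin (m+1), a i) ^ (m + 1 - 1) := Finset.prod_pow _ _ _
  have hden : (∏ i : Fin (m+1), ∏ j : Fin (m+1), (x i + b j)) =
      (∏ i : Fin (m+1), ∏ j : Fin (m+1), (1 + a i * b j)) / (∏ i : Fin (m+1), a i) ^ (m+1) := by
    rw [← Finset.prod_pow, ← Finset.prod_div_distrib]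
    refine Finset.prod_congr rfl fun i _ => ?_
    rw [show (a i)^(m+1) = ∏ _j : Fin (m+1), a i by
      simp [Finset.prod_const, Finset.card_univ], ← Finset.prod_div_distrib]
    refine Finset.prod_congr rfl fun j _ => ?_
    simp only [hx]
    have h1 := hane i
    field_simp
  rw [hnum, hP, hden, Finset.prod_inv_distrib]
  have hA : (∏ i : Fin (m+1), a i) ≠ 0 := Finset.prod_ne_zero_iff.2 fun i _ => hane i
  have hD : (∏ i : Fin (m+1), ∏ j : Fin (m+1), (1 + a i * b j)) ≠ 0 :=
    Finset.prod_ne_zero_iff.2 fun i _ => Finset.prod_ne_zero_iff.2 fun j _ =>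
      (add_pos one_pos (mul_pos (hapos i) (hbpos j))).ne'
  have hmm : m + 1 - 1 = m := rfl
  rw [hmm]
  field_simp
  ring
end

section
/- Let n ≥ 2, let a, b ∈ ℝⁿ with entries in (0,1) and pairwise distinct entries in a and in b, and fix s, t ∈ [n]. Then the absolute value of the ratio det(M)/det(M') equals |∏_{i≠s}(a_i - a_s) · ∏_{j≠t}(b_j - b_t)| / |∏_{i∈[n]}(1 + a_i b_t) · ∏_{j≠t}(1 + a_s b_j)|, where M[i,j] = 1/(1 + a_i b_j) is the n×n matrix and M' is its (s,t)-minor obtained by deleting row s and column t. -/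
open Matrix Finset

private lemma col_op {m : ℕ} {A B : Matrix (Fin m) (Fin m) ℝ} (c : Fin m → ℝ) (k : Fin m)
    (hk : c k = 0) (hAB : ∀ i j, A i j = B i j + c j * B i k) : A.det = B.det := by
  rw [← Matrix.det_transpose A, ← Matrix.det_transpose B]
  exact Matrix.det_eq_of_forall_row_eq_smul_add_const c k hk fun i j => hAB j i

private lemma key_identity {m : ℕ} (a b : Fin (m + 1) → ℝ)
    (h : ∀ i j, 1 + a i * b j ≠ 0) (s t : Fin (m + 1)) :
    (∏ j ∈ Finset.univ.erase t, (1 + a s * b j)) * (∏ i, (1 + a i * b t)) *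
      Matrix.det (Matrix.of fun i j : Fin (m + 1) => 1 / (1 + a i * b j)) =
    (-1 : ℝ) ^ (s + t : ℕ) * (∏ j ∈ Finset.univ.erase t, (b t - b j)) *
      (∏ i ∈ Finset.univ.erase s, (a i - a s)) *
      Matrix.det ((Matrix.of fun i j : Fin (m + 1) => 1 / (1 + a i * b j)).submatrix
        s.succAbove t.succAbove) := by
  set M : Matrix (Fin (m + 1)) (Fin (m + 1)) ℝ :=
    Matrix.of fun i j => 1 / (1 + a i * b j) with hMdef
  set C : Matrix (Fin (m + 1)) (Fin (m + 1)) ℝ :=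
    Matrix.of fun i j => if j = t then (1 : ℝ) else a i * (b t - b j) / (1 + a i * b j) with hC
  set D : Matrix (Fin (m + 1)) (Fin (m + 1)) ℝ :=
    Matrix.of fun i j => if j = t then (1 : ℝ) else a i / (1 + a i * b j) with hD
  set E : Matrix (Fin (m + 1)) (Fin (m + 1)) ℝ :=
    Matrix.of fun i j => if j = t then (1 : ℝ) else a i * (1 + a s * b j) / (1 + a i * b j) with hE
  set G : Matrix (Fin (m + 1)) (Fin (m + 1)) ℝ :=
    Matrix.of fun i j => if j = t then (if i = s then (1 : ℝ) else 0)
      else (if i = s then a s else 1 / (1 + a i * b j)) with hG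
  set F : Matrix (Fin (m + 1)) (Fin (m + 1)) ℝ :=
    Matrix.of fun i j => (if i = s then (1 : ℝ) else a i - a s) * G i j with hF
  -- step 1: row scaling
  have hB : Matrix.det (Matrix.of fun i j => (1 + a i * b t) * M i j)
      = (∏ i, (1 + a i * b t)) * M.det := Matrix.det_mul_column _ _
  -- step 2: column op
  have hCB : C.det = Matrix.det (Matrix.of fun i j => (1 + a i * b t) * M i j) := by
    apply col_op (fun j => if j = t then 0 else -1) t (if_pos rfl)
    intro i j
    simp only [hC, hMdef, Matrix.of_apply]
    by_cases hj : j = t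
    · subst hj
      simp
      exact (mul_inv_cancel₀ (h i j)).symm
    · simp only [if_neg hj]
      field_simp [h i j, h i t]
      ring
  -- step 3: column scaling C = v * D
  have hCD : C.det = (∏ j ∈ Finset.univ.erase t, (b t - b j)) * D.det := by
    have : C.det = Matrix.det (Matrix.of fun i j =>
        (if j = t then (1 : ℝ) else b t - b j) * D i j) := by
      congr 1
      ext i j
      by_cases hj : j = t
      · simp [hC, hD, hj]
      · simp only [hC, hD, Matrix.of_apply, if_neg hj]
        ring
    rw [this, Matrix.det_mul_row]
    congr 1
    rw [← Finset.mul_prod_erase Finset.univ _ (Finset.mem_univ t), if_pos rfl, one_mul]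
    exact Finset.prod_congr rfl fun j hj => if_neg (Finset.mem_erase.mp hj).1
  -- step 4: column scaling E = w * D
  have hED : E.det = (∏ j ∈ Finset.univ.erase t, (1 + a s * b j)) * D.det := by
    have : E.det = Matrix.det (Matrix.of fun i j =>
        (if j = t then (1 : ℝ) else 1 + a s * b j) * D i j) := by
      congr 1
      ext i j
      by_cases hj : j = t
      · simp [hE, hD, hj]
      · simp only [hE, hD, Matrix.of_apply, if_neg hj]
        ring
    rw [this, Matrix.det_mul_row]
    congr 1
    rw [← Finset.mul_prod_erase Finset.univ _ (Finset.mem_univ t), if_pos rfl, one_mul]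
    exact Finset.prod_congr rfl fun j hj => if_neg (Finset.mem_erase.mp hj).1
  -- step 5: row op F = E - row s
  have hFE : F.det = E.det := by
    apply Matrix.det_eq_of_forall_row_eq_smul_add_const
      (fun i => if i = s then 0 else -1) s (if_pos rfl)
    intro i j
    simp only [hF, hG, hE, Matrix.of_apply]
    by_cases hi : i = s
    · by_cases hj : j = t
      · simp [hi, hj]
      · simp [hi, hj, mul_div_assoc, div_self (h s j)]
    · by_cases hj : j = t
      · simp [hi, hj]
      · simp only [if_neg hi, if_neg hj]
        field_simp [h i j, h s j]
        ring
  -- step 6: row scaling F = u * G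
  have hFG : F.det = (∏ i ∈ Finset.univ.erase s, (a i - a s)) * G.det := by
    rw [hF, Matrix.det_mul_column]
    congr 1
    rw [← Finset.mul_prod_erase Finset.univ _ (Finset.mem_univ s), if_pos rfl, one_mul]
    exact Finset.prod_congr rfl fun i hi => if_neg (Finset.mem_erase.mp hi).1
  -- step 7: expand det G along column t
  have hGdet : G.det = (-1 : ℝ) ^ (s + t : ℕ) *
      Matrix.det (M.submatrix s.succAbove t.succAbove) := by
    rw [Matrix.det_succ_column G t]
    rw [Finset.sum_eq_single s]
    · have h1 : G s t = 1 := by simp [hG]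
      have h2 : G.submatrix s.succAbove t.succAbove = M.submatrix s.succAbove t.succAbove := by
        ext i j
        simp [hG, hMdef, Matrix.submatrix_apply, Fin.succAbove_ne]
      rw [h1, h2, mul_one]
    · intro i _ hi
      have : G i t = 0 := by simp [hG, hi]
      rw [this, mul_zero, zero_mul]
    · intro hs; exact absurd (Finset.mem_univ s) hs
  -- combine
  have chain1 : (∏ i, (1 + a i * b t)) * M.det
      = (∏ j ∈ Finset.univ.erase t, (b t - b j)) * D.det := by
    rw [← hB, ← hCB, hCD]
  have chain2 : (∏ j ∈ Finset.univ.erase t, (1 + a s * b j)) * D.det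
      = (∏ i ∈ Finset.univ.erase s, (a i - a s)) *
        ((-1 : ℝ) ^ (s + t : ℕ) * Matrix.det (M.submatrix s.succAbove t.succAbove)) := by
    rw [← hED, ← hFE, hFG, hGdet]
  calc (∏ j ∈ Finset.univ.erase t, (1 + a s * b j)) * (∏ i, (1 + a i * b t)) * M.det
      = (∏ j ∈ Finset.univ.erase t, (1 + a s * b j)) * ((∏ i, (1 + a i * b t)) * M.det) := by ring
    _ = (∏ j ∈ Finset.univ.erase t, (b t - b j)) *
        ((∏ j ∈ Finset.univ.erase t, (1 + a s * b j)) * D.det) := by rw [chain1]; ring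
    _ = _ := by rw [chain2]; ring

private lemma cauchylike_det_ne_zero : ∀ (m : ℕ) (a b : Fin m → ℝ),
    (∀ i j, 1 + a i * b j ≠ 0) → Function.Injective a → Function.Injective b →
    Matrix.det (Matrix.of fun i j => 1 / (1 + a i * b j)) ≠ 0 := by
  intro m
  induction m with
  | zero => intro a b _ _ _; simp
  | succ m ih =>
    intro a b h ha hb
    have key := key_identity a b h 0 0
    have h1 : (∏ j ∈ Finset.univ.erase (0 : Fin (m + 1)), (1 + a 0 * b j)) ≠ 0 :=
      Finset.prod_ne_zero_iff.mpr fun j _ => h 0 j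
    have h2 : (∏ i, (1 + a i * b 0)) ≠ 0 := Finset.prod_ne_zero_iff.mpr fun i _ => h i 0
    have h3 : (∏ j ∈ Finset.univ.erase (0 : Fin (m + 1)), (b 0 - b j)) ≠ 0 :=
      Finset.prod_ne_zero_iff.mpr fun j hj =>
        sub_ne_zero.mpr fun e => (Finset.mem_erase.mp hj).1 (hb e).symm
    have h4 : (∏ i ∈ Finset.univ.erase (0 : Fin (m + 1)), (a i - a 0)) ≠ 0 :=
      Finset.prod_ne_zero_iff.mpr fun i hi =>
        sub_ne_zero.mpr fun e => (Finset.mem_erase.mp hi).1 (ha e)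
    have h5 : Matrix.det ((Matrix.of fun i j : Fin (m + 1) => 1 / (1 + a i * b j)).submatrix
        (Fin.succAbove 0) (Fin.succAbove 0)) ≠ 0 := by
      have heq : ((Matrix.of fun i j : Fin (m + 1) => 1 / (1 + a i * b j)).submatrix
          (Fin.succAbove 0) (Fin.succAbove 0))
          = Matrix.of fun i j : Fin m =>
              1 / (1 + (a ∘ Fin.succAbove 0) i * (b ∘ Fin.succAbove 0) j) := by
        ext i j; rfl
      rw [heq]
      exact ih _ _ (fun i j => h _ _) (ha.comp Fin.succAbove_right_injective)
        (hb.comp Fin.succAbove_right_injective)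
    intro hdet
    rw [hdet, mul_zero] at key
    exact (mul_ne_zero (mul_ne_zero (mul_ne_zero (pow_ne_zero _ (by norm_num)) h3) h4) h5)
      key.symm

theorem scaled_cauchy_minor_ratio (n : ℕ) (hn : 1 ≤ n) (a b : Fin (n + 1) → ℝ)
    (ha : ∀ i, a i ∈ Set.Ioo (0 : ℝ) 1) (hb : ∀ j, b j ∈ Set.Ioo (0 : ℝ) 1)
    (hainj : Function.Injective a) (hbinj : Function.Injective b)
    (s t : Fin (n + 1)) :
    |Matrix.det (Matrix.of fun i j : Fin (n + 1) => 1 / (1 + a i * b j)) /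
        Matrix.det ((Matrix.of fun i j : Fin (n + 1) => 1 / (1 + a i * b j)).submatrix
          s.succAbove t.succAbove)| =
      |(∏ i ∈ Finset.univ.erase s, (a i - a s)) * ∏ j ∈ Finset.univ.erase t, (b j - b t)| /
        |(∏ i : Fin (n + 1), (1 + a i * b t)) * ∏ j ∈ Finset.univ.erase t, (1 + a s * b j)| := by
  have h : ∀ i j, 1 + a i * b j ≠ 0 := fun i j => by
    have h1 := (ha i).1; have h2 := (hb j).1; nlinarith
  have key := key_identity a b h s t
  set M : Matrix (Fin (n + 1)) (Fin (n + 1)) ℝ :=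
    Matrix.of fun i j => 1 / (1 + a i * b j) with hMdef
  have hM' : Matrix.det (M.submatrix s.succAbove t.succAbove) ≠ 0 := by
    have heq : M.submatrix s.succAbove t.succAbove
        = Matrix.of fun i j : Fin n =>
            1 / (1 + (a ∘ s.succAbove) i * (b ∘ t.succAbove) j) := by
      ext i j; rfl
    rw [heq]
    exact cauchylike_det_ne_zero n _ _ (fun i j => h _ _)
      (hainj.comp Fin.succAbove_right_injective) (hbinj.comp Fin.succAbove_right_injective)
  have hP : (∏ j ∈ Finset.univ.erase t, (1 + a s * b j)) * (∏ i, (1 + a i * b t)) ≠ 0 :=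
    mul_ne_zero (Finset.prod_ne_zero_iff.mpr fun j _ => h s j)
      (Finset.prod_ne_zero_iff.mpr fun i _ => h i t)
  have hratio : M.det / Matrix.det (M.submatrix s.succAbove t.succAbove)
      = ((-1 : ℝ) ^ (s + t : ℕ) * (∏ j ∈ Finset.univ.erase t, (b t - b j)) *
          (∏ i ∈ Finset.univ.erase s, (a i - a s))) /
        ((∏ j ∈ Finset.univ.erase t, (1 + a s * b j)) * (∏ i, (1 + a i * b t))) := by
    rw [div_eq_div_iff hM' hP]
    linear_combination key
  rw [hratio, abs_div]
  congr 1
  · rw [abs_mul, abs_mul, abs_pow, abs_neg, abs_one, one_pow, one_mul, abs_mul]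
    have hbp : |∏ j ∈ Finset.univ.erase t, (b t - b j)|
        = |∏ j ∈ Finset.univ.erase t, (b j - b t)| := by
      rw [Finset.abs_prod, Finset.abs_prod]
      exact Finset.prod_congr rfl fun j _ => abs_sub_comm _ _
    rw [hbp, mul_comm]
  · rw [abs_mul, abs_mul, mul_comm]
end

section
/- Let m > 0, let λ ∈ ℕ^m be a weakly increasing integer tuple, and let u ∈ ℝ^m with 0 ≤ u_1 ≤ u_2 ≤ ... ≤ u_m. Then u^λ ≤ s_λ(u) ≤ (V(λ+δ)/V(δ)) · u^λ, where u^λ = ∏_i u_i^{λ_i}, δ = (0,1,...,m-1), and V(x) = ∏_{i<j}(x_j - x_i) is the Vandermonde determinant. -/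
/-- A semistandard Young tableau (in the paper's convention) of shape `lam`
(weakly increasing row lengths, rows indexed bottom to top) on alphabet `Fin m`:
entries weakly decrease along each row from left to right, and strictly
decrease from top to bottom along each column. -/
def IsSSYT {m : ℕ} (lam : Fin m → ℕ) (T : (i : Fin m) → Fin (lam i) → Fin m) : Prop :=
  (∀ (i : Fin m) (j j' : Fin (lam i)), j ≤ j' → T i j' ≤ T i j) ∧
  (∀ (i i' : Fin m), i < i' → ∀ (j : Fin (lam i)) (j' : Fin (lam i')),
      (j : ℕ) = (j' : ℕ) → T i j < T i' j')

/-- The number of cells of the tableau `T` whose entry is the letter `k`. -/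
def cellCount {m : ℕ} (lam : Fin m → ℕ)
    (T : (i : Fin m) → Fin (lam i) → Fin m) (k : Fin m) : ℕ :=
  ∑ i : Fin m, (Finset.univ.filter fun j : Fin (lam i) => T i j = k).card

open scoped Classical in
/-- The Schur polynomial of shape `lam` evaluated at `u`, defined combinatorially
(Littlewood's definition) as the sum over all semistandard Young tableaux of
shape `lam` on alphabet `[m]` of the monomial `∏ k, u k ^ (number of k's in T)`. -/
noncomputable def schur {m : ℕ} (lam : Fin m → ℕ) (u : Fin m → ℝ) : ℝ :=
  ∑ T ∈ Finset.univ.filter (IsSSYT lam), ∏ k : Fin m, u k ^ cellCount lam T k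

/-- entry in row `i` is at most `i` -/
lemma ssyt_entry_le {m : ℕ} {lam : Fin m → ℕ} (hlam : Monotone lam)
    {T : (i : Fin m) → Fin (lam i) → Fin m} (hT : IsSSYT lam T)
    (i : Fin m) (j : Fin (lam i)) : (T i j : ℕ) ≤ i := by
  have key : ∀ d : ℕ, ∀ (i : Fin m), m ≤ (i : ℕ) + d + 1 → ∀ j : Fin (lam i), (T i j : ℕ) ≤ i := by
    intro d
    induction d with
    | zero => intro i hi j; have := (T i j).isLt; omega
    | succ d ih =>
      intro i hi j
      by_cases h : m ≤ (i : ℕ) + d + 1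
      · exact ih i h j
      · have hi1 : (i : ℕ) + 1 < m := by omega
        set i' : Fin m := ⟨(i : ℕ) + 1, hi1⟩ with hi'
        have hle : lam i ≤ lam i' := hlam (by simp [hi', Fin.le_def])
        set j' : Fin (lam i') := ⟨(j : ℕ), lt_of_lt_of_le j.isLt hle⟩ with hj'
        have h1 : T i j < T i' j' := hT.2 i i' (by simp [hi', Fin.lt_def]) j j' rfl
        have h2 : (T i' j' : ℕ) ≤ (i : ℕ) + 1 := by
          have := ih i' (by simp [hi']; omega) j'
          simpa [hi'] using this
        have := Fin.lt_def.mp h1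
        omega
  exact key m i (by omega) j


lemma monomial_regroup' {m : ℕ} (lam : Fin m → ℕ)
    (T : (i : Fin m) → Fin (lam i) → Fin m) (u : Fin m → ℝ) :
    ∏ k : Fin m, u k ^ cellCount lam T k = ∏ i : Fin m, ∏ j : Fin (lam i), u (T i j) := by
  unfold cellCount
  have h1 : ∀ k : Fin m, u k ^ (∑ i : Fin m, (Finset.univ.filter fun j : Fin (lam i) => T i j = k).card)
      = ∏ i : Fin m, u k ^ (Finset.univ.filter fun j : Fin (lam i) => T i j = k).card := by
    intro k; rw [← Finset.prod_pow_eq_pow_sum]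
  rw [Finset.prod_congr rfl fun k _ => h1 k, Finset.prod_comm]
  refine Finset.prod_congr rfl fun i _ => ?_
  calc ∏ k : Fin m, u k ^ (Finset.univ.filter fun j : Fin (lam i) => T i j = k).card
      = ∏ k : Fin m, ∏ _j ∈ (Finset.univ.filter fun j : Fin (lam i) => T i j = k), u k := by
        simp [Finset.prod_const]
    _ = ∏ j : Fin (lam i), u (T i j) := Finset.prod_fiberwise' _ _ _

lemma monomial_le {m : ℕ} {lam : Fin m → ℕ} (hlam : Monotone lam)
    {T : (i : Fin m) → Fin (lam i) → Fin m} (hT : IsSSYT lam T)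
    {u : Fin m → ℝ} (hu0 : ∀ i, 0 ≤ u i) (hu : Monotone u) :
    ∏ k : Fin m, u k ^ cellCount lam T k ≤ ∏ i : Fin m, u i ^ lam i := by
  rw [monomial_regroup']
  refine Finset.prod_le_prod (fun i _ => Finset.prod_nonneg fun j _ => hu0 _) fun i _ => ?_
  calc ∏ j : Fin (lam i), u (T i j) ≤ ∏ _j : Fin (lam i), u i := by
        refine Finset.prod_le_prod (fun j _ => hu0 _) fun j _ => ?_
        exact hu (Fin.le_def.mpr (ssyt_entry_le hlam hT i j))
    _ = u i ^ lam i := by simp [Finset.prod_const]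

lemma isSSYT_base {m : ℕ} (lam : Fin m → ℕ) : IsSSYT lam (fun i _ => i) :=
  ⟨fun _ _ _ _ => le_refl _, fun _ _ h _ _ _ => h⟩

lemma cellCount_base {m : ℕ} (lam : Fin m → ℕ) (k : Fin m) :
    cellCount lam (fun i _ => i) k = lam k := by
  unfold cellCount
  rw [Finset.sum_eq_single k]
  · simp
  · intro i _ hik
    simp [Finset.filter_eq_empty_iff, hik]
  · simp

lemma mem_iff_lt_card {L : ℕ} (S : Finset (Fin L))
    (hS : ∀ a b : Fin L, a ≤ b → b ∈ S → a ∈ S) (j : Fin L) : j ∈ S ↔ (j : ℕ) < S.card := by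
  rcases S.eq_empty_or_nonempty with h | h
  · simp [h]
  · have hIic : S = Finset.Iic (S.max' h) := by
      ext a
      simp only [Finset.mem_Iic]
      exact ⟨fun ha => S.le_max' a ha, fun ha => hS a _ ha (S.max'_mem h)⟩
    rw [hIic, Fin.card_Iic, Finset.mem_Iic, Fin.le_def]
    omega

noncomputable def cdet (m : ℕ) (lam : Fin m → ℕ) : ℚ :=
  (Matrix.of fun i j : Fin m => ((lam i + (i : ℕ)).choose (j : ℕ) : ℚ)).det

lemma sum_range_choose_eq (t k : ℕ) : ∑ c ∈ Finset.range t, c.choose k = t.choose (k + 1) := by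
  induction t with
  | zero => simp
  | succ t ih => rw [Finset.sum_range_succ, ih, Nat.choose_succ_succ' t k]; omega

lemma sum_Icc_choose_q (s t k : ℕ) (h : s ≤ t) :
    ∑ c ∈ Finset.Icc s t, ((c.choose k : ℚ)) = ((t + 1).choose (k + 1) : ℚ) - (s.choose (k + 1) : ℚ) := by
  have e : ∀ r : ℕ, (∑ c ∈ Finset.range r, ((c.choose k : ℚ))) = (r.choose (k + 1) : ℚ) := by
    intro r; rw [← Nat.cast_sum, sum_range_choose_eq]
  have h1 : ∑ c ∈ Finset.Ico 0 s, ((c.choose k : ℚ)) + ∑ c ∈ Finset.Ico s (t + 1), ((c.choose k : ℚ))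
      = ∑ c ∈ Finset.Ico 0 (t + 1), ((c.choose k : ℚ)) :=
    Finset.sum_Ico_consecutive _ (Nat.zero_le s) (by omega)
  rw [← Finset.Ico_add_one_right_eq_Icc]
  have h2 := e s
  have h3 := e (t + 1)
  rw [Finset.range_eq_Ico] at h2 h3
  linarith

lemma cdet_zero (m : ℕ) : cdet m (fun _ => 0) = 1 := by
  unfold cdet
  rw [Matrix.det_of_lowerTriangular _ ?ht]
  case ht =>
    intro i j hij
    have hij' : i < j := hij
    simp [Nat.choose_eq_zero_of_lt (by exact_mod_cast hij')]
  · simp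

open Polynomial in
lemma vandermonde_eq_fact_mul_cdet (m : ℕ) (lam : Fin m → ℕ) :
    (Matrix.vandermonde fun i : Fin m => ((lam i + (i : ℕ) : ℕ) : ℚ)).det
      = (∏ i : Fin m, ((i : ℕ).factorial : ℚ)) * cdet m lam := by
  rw [Matrix.det_eval_matrixOfPolynomials_eq_det_vandermonde _ (fun i => descPochhammer ℚ i)
      (fun i => descPochhammer_natDegree ℚ i) (fun i => monic_descPochhammer ℚ i)]
  have key : ∀ (i j : Fin m),
      (descPochhammer ℚ (j : ℕ)).eval (((lam i + (i : ℕ) : ℕ)) : ℚ)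
        = ((j : ℕ).factorial : ℚ) * (((lam i + (i : ℕ)).choose (j : ℕ) : ℕ) : ℚ) := by
    intro i j
    rw [descPochhammer_eval_eq_descFactorial, Nat.descFactorial_eq_factorial_mul_choose]
    push_cast
    ring
  calc (Matrix.of fun i j : Fin m => (descPochhammer ℚ (j : ℕ)).eval (((lam i + (i : ℕ) : ℕ)) : ℚ)).det
      = (Matrix.of fun i j : Fin m => ((j : ℕ).factorial : ℚ) *
          (((lam i + (i : ℕ)).choose (j : ℕ) : ℕ) : ℚ)).det := by
        congr 1; ext i j; exact key i j
    _ = (∏ i : Fin m, ((i : ℕ).factorial : ℚ)) * cdet m lam := Matrix.det_mul_row _ _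

lemma det_diff (n : ℕ) (y : Fin (n + 1) → ℕ) :
    (Matrix.of fun i j : Fin n =>
        (((y i.succ).choose ((j : ℕ) + 1) : ℕ) : ℚ) - (((y i.castSucc).choose ((j : ℕ) + 1) : ℕ) : ℚ)).det
      = (Matrix.of fun i j : Fin (n + 1) => (((y i).choose (j : ℕ) : ℕ) : ℚ)).det := by
  classical
  set M : Matrix (Fin (n + 1)) (Fin (n + 1)) ℚ :=
    Matrix.of fun i j : Fin (n + 1) => (((y i).choose (j : ℕ) : ℕ) : ℚ) with hM
  set P : Matrix (Fin (n + 1)) (Fin (n + 1)) ℚ :=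
    Matrix.of fun i k : Fin (n + 1) =>
      (if k = i then (1 : ℚ) else 0) + (if (k : ℕ) + 1 = (i : ℕ) then (-1 : ℚ) else 0) with hP
  have hPtri : P.BlockTriangular OrderDual.toDual := by
    intro i j hij
    have hij' : i < j := hij
    have h1 : ¬(j = i) := Fin.ne_of_gt hij'
    have h2 : ¬((j : ℕ) + 1 = (i : ℕ)) := by have := Fin.lt_def.mp hij'; omega
    simp [hP, h1, h2]
  have hPdet : P.det = 1 := by
    rw [Matrix.det_of_lowerTriangular P hPtri]
    refine Finset.prod_eq_one fun i _ => ?_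
    have : ¬((i : ℕ) + 1 = (i : ℕ)) := by omega
    simp [hP, this]
  have hentry0 : ∀ j, (P * M) 0 j = M 0 j := by
    intro j
    rw [Matrix.mul_apply]
    have : ∀ k : Fin (n + 1), ¬((k : ℕ) + 1 = ((0 : Fin (n + 1)) : ℕ)) := by
      intro k; simp
    simp [hP, add_mul, ite_mul, Finset.sum_add_distrib, Finset.sum_ite_eq', this]
  have hentrys : ∀ (i' : Fin n) (j), (P * M) i'.succ j = M i'.succ j - M i'.castSucc j := by
    intro i' j
    rw [Matrix.mul_apply]
    have hcond : ∀ k : Fin (n + 1), ((k : ℕ) + 1 = ((i'.succ : Fin (n + 1)) : ℕ)) ↔ k = i'.castSucc := by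
      intro k
      rw [Fin.ext_iff]
      simp
    simp [hP, add_mul, ite_mul, Finset.sum_add_distrib, Finset.sum_ite_eq', hcond]
    have hcond2 : ∀ k : Fin (n + 1), ((k : ℕ) = ((i' : ℕ))) ↔ k = i'.castSucc := by
      intro k; rw [Fin.ext_iff]; simp
    simp only [hcond2]
    rw [Finset.sum_ite_eq' Finset.univ i'.castSucc (fun x => -M x j)]
    simp
    ring
  have hdetPM : (P * M).det = M.det := by rw [Matrix.det_mul, hPdet, one_mul]
  have hexp := Matrix.det_succ_column_zero (P * M)
  rw [Finset.sum_eq_single (0 : Fin (n + 1))] at hexp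
  · have h00 : (P * M) 0 0 = 1 := by
      rw [hentry0]; simp [hM]
    rw [h00] at hexp
    simp only [Fin.val_zero, pow_zero, one_mul, mul_one] at hexp
    rw [hdetPM, Fin.succAbove_zero] at hexp
    rw [hexp]
    congr 1
    ext i' j'
    rw [Matrix.submatrix_apply, hentrys]
    simp [hM]
  · intro i _ hi
    obtain ⟨i', rfl⟩ := Fin.eq_succ_of_ne_zero hi
    rw [hentrys]
    simp [hM]
  · intro h; exact absurd (Finset.mem_univ _) h

lemma cdet_rec (n : ℕ) (lam : Fin (n + 1) → ℕ) (hlam : Monotone lam) :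
    ∑ ν ∈ Finset.Icc (fun i : Fin n => lam i.castSucc) (fun i => lam i.succ), cdet n ν
      = cdet (n + 1) lam := by
  classical
  -- Step 1: the Icc box is a piFinset
  have hbox : Finset.Icc (fun i : Fin n => lam i.castSucc) (fun i => lam i.succ)
      = Fintype.piFinset (fun i : Fin n => Finset.Icc (lam i.castSucc) (lam i.succ)) := by
    ext ν
    simp [Finset.mem_Icc, Fintype.mem_piFinset, Pi.le_def, forall_and]
  -- Step 2: multilinearity of det in rows
  have hml := (Matrix.detRowAlternating :
      (Fin n → ℚ) [⋀^Fin n]→ₗ[ℚ] ℚ).toMultilinearMap.map_sum_finset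
    (g := fun (i : Fin n) (c : ℕ) (j : Fin n) => (((c + (i : ℕ)).choose (j : ℕ) : ℕ) : ℚ))
    (A := fun i : Fin n => Finset.Icc (lam i.castSucc) (lam i.succ))
  have hRHS : ∑ ν ∈ Finset.Icc (fun i : Fin n => lam i.castSucc) (fun i => lam i.succ), cdet n ν
      = ∑ r ∈ Fintype.piFinset (fun i : Fin n => Finset.Icc (lam i.castSucc) (lam i.succ)),
          (Matrix.detRowAlternating :
            (Fin n → ℚ) [⋀^Fin n]→ₗ[ℚ] ℚ).toMultilinearMap
            (fun i => fun j : Fin n => (((r i + (i : ℕ)).choose (j : ℕ) : ℕ) : ℚ)) := by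
    rw [hbox]
    rfl
  -- Step 3: row sums via hockey stick
  have hrow : (fun i : Fin n => ∑ c ∈ Finset.Icc (lam i.castSucc) (lam i.succ),
        fun j : Fin n => (((c + (i : ℕ)).choose (j : ℕ) : ℕ) : ℚ))
      = fun i : Fin n => fun j : Fin n =>
          (((lam i.succ + (i : ℕ) + 1).choose ((j : ℕ) + 1) : ℕ) : ℚ)
            - (((lam i.castSucc + (i : ℕ)).choose ((j : ℕ) + 1) : ℕ) : ℚ) := by
    funext i j
    rw [Finset.sum_apply]
    have hmap : Finset.Icc (lam i.castSucc + (i : ℕ)) (lam i.succ + (i : ℕ))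
        = (Finset.Icc (lam i.castSucc) (lam i.succ)).map (addRightEmbedding (i : ℕ)) := by
      rw [Finset.map_add_right_Icc]
    have := sum_Icc_choose_q (lam i.castSucc + (i : ℕ)) (lam i.succ + (i : ℕ)) (j : ℕ)
      (by have := hlam (Fin.castSucc_le_succ i); omega)
    rw [hmap, Finset.sum_map] at this
    simpa [addRightEmbedding] using this
  rw [hRHS, ← hml, hrow]
  exact det_diff n (fun i => lam i + (i : ℕ))

section strip
variable {n : ℕ} (lam : Fin (n + 1) → ℕ)

def nuF (T : (i : Fin (n + 1)) → Fin (lam i) → Fin (n + 1)) (i' : Fin n) : ℕ :=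
  (Finset.univ.filter fun j : Fin (lam i'.succ) => T i'.succ j ≠ 0).card

lemma nuF_le (T : (i : Fin (n + 1)) → Fin (lam i) → Fin (n + 1)) (i' : Fin n) :
    nuF lam T i' ≤ lam i'.succ :=
  le_trans (Finset.card_filter_le _ _) (by simp)

def stripF (T : (i : Fin (n + 1)) → Fin (lam i) → Fin (n + 1)) (i' : Fin n)
    (j : Fin (nuF lam T i')) : Fin n :=
  ⟨min ((T i'.succ ⟨(j : ℕ), lt_of_lt_of_le j.isLt (nuF_le lam T i')⟩ : ℕ) - 1) (i' : ℕ),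
    lt_of_le_of_lt (min_le_right _ _) i'.isLt⟩

variable {lam}

lemma nuF_mem_iff {T : (i : Fin (n + 1)) → Fin (lam i) → Fin (n + 1)} (hT : IsSSYT lam T)
    (i' : Fin n) (j : Fin (lam i'.succ)) : T i'.succ j ≠ 0 ↔ (j : ℕ) < nuF lam T i' := by
  refine mem_iff_lt_card _ ?_ j |>.symm.trans ?_ |>.symm
  · intro a b hab hb
    simp only [Finset.mem_filter, Finset.mem_univ, true_and] at hb ⊢
    intro ha0
    have := hT.1 i'.succ a b hab
    rw [ha0] at this
    exact hb (le_antisymm (by simpa using this) (Fin.zero_le _))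
  · simp

lemma nuF_lower (hlam : Monotone lam) {T : (i : Fin (n + 1)) → Fin (lam i) → Fin (n + 1)}
    (hT : IsSSYT lam T) (i' : Fin n) : lam i'.castSucc ≤ nuF lam T i' := by
  by_contra hlt
  push_neg at hlt
  have hle : lam i'.castSucc ≤ lam i'.succ := hlam (Fin.castSucc_le_succ i')
  set j : Fin (lam i'.succ) := ⟨nuF lam T i', lt_of_lt_of_le hlt hle⟩ with hj
  set j0 : Fin (lam i'.castSucc) := ⟨nuF lam T i', hlt⟩ with hj0
  have h1 : T i'.castSucc j0 < T i'.succ j :=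
    hT.2 i'.castSucc i'.succ (Fin.castSucc_lt_succ (i := i')) j0 j rfl
  have h2 : T i'.succ j ≠ 0 := by
    intro h0
    rw [h0] at h1
    exact absurd h1 (Fin.not_lt.mpr (Fin.zero_le _))
  have := (nuF_mem_iff hT i' j).mp h2
  simp [hj] at this
end strip

open scoped Classical in
lemma card_ssyt_le (n : ℕ) (lam : Fin (n + 1) → ℕ) (hlam : Monotone lam) :
    (Finset.univ.filter (IsSSYT lam)).card
      ≤ ∑ ν ∈ Finset.Icc (fun i : Fin n => lam i.castSucc) (fun i => lam i.succ),
          (Finset.univ.filter (IsSSYT ν)).card := by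
  classical
  rw [← Finset.card_sigma]
  set Tgt := (Finset.Icc (fun i : Fin n => lam i.castSucc) (fun i => lam i.succ)).sigma
      (fun ν => Finset.univ.filter (IsSSYT ν)) with hTgt
  set F : ((i : Fin (n + 1)) → Fin (lam i) → Fin (n + 1)) →
      Σ ν : Fin n → ℕ, (i' : Fin n) → Fin (ν i') → Fin n :=
    fun T => ⟨nuF lam T, stripF lam T⟩ with hF
  set G : (Σ ν : Fin n → ℕ, (i' : Fin n) → Fin (ν i') → Fin n) →
      ((i : Fin (n + 1)) → Fin (lam i) → Fin (n + 1)) :=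
    fun p i => Fin.cases (motive := fun i => Fin (lam i) → Fin (n + 1)) (fun _ => 0)
      (fun i' j => if h : (j : ℕ) < p.1 i' then (p.2 i' ⟨(j : ℕ), h⟩).succ else 0) i with hG
  have hGF : ∀ T, IsSSYT lam T → G (F T) = T := by
    intro T hT
    funext i
    refine Fin.cases ?_ ?_ i
    · funext j
      have h0 : (T 0 j : ℕ) = 0 := Nat.le_antisymm (ssyt_entry_le hlam hT 0 j) (Nat.zero_le _)
      simp [hG, hF]
      exact (Fin.ext h0.symm : (0 : Fin (n + 1)) = T 0 j)
    · intro i'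
      funext j
      simp only [hG, hF, Fin.cases_succ]
      by_cases h : (j : ℕ) < nuF lam T i'
      · rw [dif_pos h]
        have hje : (⟨(j : ℕ), lt_of_lt_of_le (Fin.isLt ⟨(j : ℕ), h⟩) (nuF_le lam T i')⟩ :
            Fin (lam i'.succ)) = j := Fin.ext rfl
        have hne : T i'.succ j ≠ 0 := (nuF_mem_iff hT i' j).mpr h
        have h1 : 1 ≤ (T i'.succ j : ℕ) := by
          rcases Nat.eq_zero_or_pos (T i'.succ j : ℕ) with h0 | h0
          · exact absurd (Fin.ext h0 : T i'.succ j = 0) hne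
          · exact h0
        have h2 : (T i'.succ j : ℕ) ≤ (i' : ℕ) + 1 := ssyt_entry_le hlam hT i'.succ j
        refine Fin.ext ?_
        simp only [stripF, Fin.val_succ, hje]
        omega
      · rw [dif_neg h]
        have := (nuF_mem_iff hT i' j).not
        simp only [not_not, not_lt] at this
        exact (this.mpr (le_of_not_gt h)).symm
  have hmaps : ∀ T ∈ Finset.univ.filter (IsSSYT lam), F T ∈ Tgt := by
    intro T hTmem
    have hT : IsSSYT lam T := (Finset.mem_filter.mp hTmem).2
    rw [hTgt, Finset.mem_sigma]
    constructor
    · rw [Finset.mem_Icc]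
      constructor
      · intro i'; exact nuF_lower hlam hT i'
      · intro i'; exact nuF_le lam T i'
    · rw [Finset.mem_filter]
      refine ⟨Finset.mem_univ _, ?_, ?_⟩
      · intro i' j j' hjj'
        have ha := hT.1 i'.succ ⟨(j : ℕ), lt_of_lt_of_le j.isLt (nuF_le lam T i')⟩
          ⟨(j' : ℕ), lt_of_lt_of_le j'.isLt (nuF_le lam T i')⟩ hjj'
        simp only [F, stripF, Fin.le_def]
        have := Fin.le_def.mp ha
        omega
      · intro i' i'' hii' j j' hjv
        have hlt := hT.2 i'.succ i''.succ (Fin.succ_lt_succ_iff.mpr hii')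
          ⟨(j : ℕ), lt_of_lt_of_le j.isLt (nuF_le lam T i')⟩
          ⟨(j' : ℕ), lt_of_lt_of_le j'.isLt (nuF_le lam T i'')⟩ hjv
        have ha1 : T i'.succ ⟨(j : ℕ), lt_of_lt_of_le j.isLt (nuF_le lam T i')⟩ ≠ 0 :=
          (nuF_mem_iff hT i' _).mpr (by exact j.isLt)
        have hb2 : (T i''.succ ⟨(j' : ℕ), lt_of_lt_of_le j'.isLt (nuF_le lam T i'')⟩ : ℕ)
            ≤ (i'' : ℕ) + 1 := ssyt_entry_le hlam hT i''.succ _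
        have ha1' : 1 ≤ (T i'.succ ⟨(j : ℕ), lt_of_lt_of_le j.isLt (nuF_le lam T i')⟩ : ℕ) := by
          rcases Nat.eq_zero_or_pos
            (T i'.succ ⟨(j : ℕ), lt_of_lt_of_le j.isLt (nuF_le lam T i')⟩ : ℕ) with h0 | h0
          · exact absurd (Fin.ext h0) ha1
          · exact h0
        simp only [F, stripF, Fin.lt_def]
        have := Fin.lt_def.mp hlt
        have hii'' := Fin.lt_def.mp hii'
        omega
  refine Finset.card_le_card_of_injOn F hmaps ?_
  intro T₁ h₁ T₂ h₂ heq
  have hT₁ : IsSSYT lam T₁ := by simpa using h₁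
  have hT₂ : IsSSYT lam T₂ := by simpa using h₂
  rw [← hGF T₁ hT₁, ← hGF T₂ hT₂, heq]


open scoped Classical in
lemma card_le_cdet : ∀ (m : ℕ) (lam : Fin m → ℕ), Monotone lam →
    (((Finset.univ.filter (IsSSYT lam)).card : ℕ) : ℚ) ≤ cdet m lam := by
  intro m
  induction m with
  | zero =>
    intro lam _
    have h1 : (Finset.univ.filter (IsSSYT lam)) = Finset.univ :=
      Finset.filter_true_of_mem fun T _ => ⟨fun i => i.elim0, fun i => i.elim0⟩
    rw [h1, Finset.card_univ]
    have : Fintype.card ((i : Fin 0) → Fin (lam i) → Fin 0) = 1 := by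
      rw [Fintype.card_pi]
      simp
    rw [this]
    unfold cdet
    rw [Matrix.det_fin_zero]
    norm_num
  | succ n ih =>
    intro lam hlam
    have hbox : ∀ ν ∈ Finset.Icc (fun i : Fin n => lam i.castSucc) (fun i => lam i.succ),
        Monotone ν := by
      intro ν hν
      rw [Finset.mem_Icc] at hν
      intro a b hab
      rcases eq_or_lt_of_le hab with h | h
      · rw [h]
      · calc ν a ≤ lam a.succ := hν.2 a
          _ ≤ lam b.castSucc := hlam (by
              rw [Fin.le_def]
              have hh := Fin.lt_def.mp h
              simp only [Fin.val_succ, Fin.coe_castSucc]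
              omega)
          _ ≤ ν b := hν.1 b
    calc (((Finset.univ.filter (IsSSYT lam)).card : ℕ) : ℚ)
        ≤ ((∑ ν ∈ Finset.Icc (fun i : Fin n => lam i.castSucc) (fun i => lam i.succ),
            (Finset.univ.filter (IsSSYT ν)).card : ℕ) : ℚ) := by
          exact_mod_cast card_ssyt_le n lam hlam
      _ = ∑ ν ∈ Finset.Icc (fun i : Fin n => lam i.castSucc) (fun i => lam i.succ),
            (((Finset.univ.filter (IsSSYT ν)).card : ℕ) : ℚ) := by push_cast; rfl
      _ ≤ ∑ ν ∈ Finset.Icc (fun i : Fin n => lam i.castSucc) (fun i => lam i.succ),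
            cdet n ν := Finset.sum_le_sum fun ν hν => ih ν (hbox ν hν)
      _ = cdet (n + 1) lam := cdet_rec n lam hlam

theorem schur_first_order_approximation (m : ℕ) (hm : 0 < m) (lam : Fin m → ℕ)
    (hlam : Monotone lam) (u : Fin m → ℝ) (hu0 : ∀ i, 0 ≤ u i) (hu : Monotone u) :
    (∏ i : Fin m, u i ^ lam i) ≤ schur lam u ∧
    schur lam u ≤
      ((∏ i : Fin m, ∏ j ∈ Finset.Ioi i, (((lam j : ℝ) + (j : ℕ)) - ((lam i : ℝ) + (i : ℕ)))) /
          ∏ i : Fin m, ∏ j ∈ Finset.Ioi i, (((j : ℕ) : ℝ) - ((i : ℕ) : ℝ))) *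
        ∏ i : Fin m, u i ^ lam i := by
  classical
  have hP0 : 0 ≤ ∏ i : Fin m, u i ^ lam i :=
    Finset.prod_nonneg fun i _ => pow_nonneg (hu0 i) _
  constructor
  · -- lower bound
    unfold schur
    have hmem : (fun (i : Fin m) (_ : Fin (lam i)) => i) ∈
        Finset.univ.filter (IsSSYT lam) := by
      exact Finset.mem_filter.mpr ⟨Finset.mem_univ _, isSSYT_base lam⟩
    have := Finset.single_le_sum (f := fun T => ∏ k : Fin m, u k ^ cellCount lam T k)
      (fun T _ => Finset.prod_nonneg fun k _ => pow_nonneg (hu0 k) _) hmem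
    calc ∏ i : Fin m, u i ^ lam i
        = ∏ k : Fin m, u k ^ cellCount lam (fun i _ => i) k := by
          refine Finset.prod_congr rfl fun k _ => ?_
          rw [cellCount_base]
      _ ≤ _ := this
  · -- upper bound
    unfold schur
    set P := ∏ i : Fin m, u i ^ lam i with hP
    have hcard : ∀ T ∈ Finset.univ.filter (IsSSYT lam),
        ∏ k : Fin m, u k ^ cellCount lam T k ≤ P := by
      intro T hT
      exact monomial_le hlam (by simpa using hT) hu0 hu
    have h1 : schur lam u ≤ ((Finset.univ.filter (IsSSYT lam)).card : ℝ) * P := by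
      unfold schur
      calc ∑ T ∈ Finset.univ.filter (IsSSYT lam), ∏ k : Fin m, u k ^ cellCount lam T k
          ≤ (Finset.univ.filter (IsSSYT lam)).card • P := Finset.sum_le_card_nsmul _ _ _ hcard
        _ = ((Finset.univ.filter (IsSSYT lam)).card : ℝ) * P := by
          rw [nsmul_eq_mul]
    refine le_trans h1 ?_
    refine mul_le_mul_of_nonneg_right ?_ hP0
    -- the counting bound, over ℚ then cast
    have hq := card_le_cdet m lam hlam
    set Fq : ℚ := ∏ i : Fin m, ((i : ℕ).factorial : ℚ) with hFq
    have hFqpos : 0 < Fq :=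
      Finset.prod_pos fun i _ => by exact_mod_cast Nat.factorial_pos _
    have hV : (∏ i : Fin m, ∏ j ∈ Finset.Ioi i,
        ((((lam j + (j : ℕ) : ℕ)) : ℚ) - (((lam i + (i : ℕ) : ℕ)) : ℚ))) = Fq * cdet m lam := by
      rw [← Matrix.det_vandermonde]
      exact vandermonde_eq_fact_mul_cdet m lam
    have hD : (∏ i : Fin m, ∏ j ∈ Finset.Ioi i,
        ((((j : ℕ) : ℚ)) - (((i : ℕ) : ℚ)))) = Fq := by
      have := vandermonde_eq_fact_mul_cdet m (fun _ => 0)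
      rw [cdet_zero, mul_one] at this
      rw [hFq, ← this, ← Matrix.det_vandermonde]
      congr 1
      ext i j
      simp [Matrix.vandermonde]
    have hcast : ((Finset.univ.filter (IsSSYT lam)).card : ℚ)
        ≤ (∏ i : Fin m, ∏ j ∈ Finset.Ioi i,
            ((((lam j + (j : ℕ) : ℕ)) : ℚ) - (((lam i + (i : ℕ) : ℕ)) : ℚ))) /
          (∏ i : Fin m, ∏ j ∈ Finset.Ioi i, ((((j : ℕ) : ℚ)) - (((i : ℕ) : ℚ)))) := by
      rw [hV, hD, mul_comm, mul_div_assoc, div_self (ne_of_gt hFqpos), mul_one]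
      exact hq
    have hfinal := (Rat.cast_le (K := ℝ)).mpr hcast
    push_cast at hfinal ⊢
    convert hfinal using 2 <;> push_cast <;> ring
end

section
/- Let f : [0,1] → [0,1] be the Gaussian-type kernel restricted map f(x) = e^{-Bx} with B ≥ 1, let D ≥ 2, and let M be the (D+1)×(D+1) matrix M[ℓ,p] = f(α_ℓ · p) where α_ℓ are chosen so that the values x_ℓ = e^{-B α_ℓ} form an arithmetic progression with common difference (1 - e^{-B/D})/D starting at 1. Then for all s, t, |det(M^{s-}_{t-})/det(M)| ≤ 2^D · ((1 - e^{-B/D})/(2e))^{-D}, and consequently τ(M) := max_{b≠0} ‖M^{-1}b‖_∞/‖b‖_∞ ≤ (5e/(1 - e^{-B/D}))^D. -/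
open Finset Polynomial Nat

-- factorial lower bound: n^n ≤ n! e^n
lemma aux_fact_lb (n : ℕ) : (n : ℝ) ^ n ≤ (n ! : ℝ) * Real.exp 1 ^ n := by
  have h := Real.sum_le_exp_of_nonneg (x := (n : ℝ)) (Nat.cast_nonneg n) (n + 1)
  have h1 : (n : ℝ) ^ n / (n ! : ℝ) ≤ Real.exp n :=
    le_trans (Finset.single_le_sum (f := fun i => (n : ℝ) ^ i / (i ! : ℝ))
      (fun i _ => by positivity) (self_mem_range_succ n)) h
  rw [div_le_iff₀ (by positivity)] at h1
  calc (n : ℝ) ^ n ≤ Real.exp n * n ! := h1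
    _ = (n ! : ℝ) * Real.exp 1 ^ n := by
        rw [← Real.exp_nat_mul, mul_one, mul_comm]

-- ∏_{j<n} (n-j) = n!
lemma aux_prod_range_sub (n : ℕ) : (∏ j ∈ range n, (n - j)) = n ! := by
  rw [← prod_range_add_one_eq_factorial, ← prod_range_reflect]
  exact prod_congr rfl fun j hj => by simp only [mem_range] at hj; omega

lemma aux_choose_le (D k : ℕ) : (D.choose k) ≤ 2 ^ D := by
  rcases le_or_gt k D with hk | hk
  · calc D.choose k ≤ ∑ m ∈ range (D+1), D.choose m :=
        Finset.single_le_sum (fun i _ => Nat.zero_le _) (by simp [Nat.lt_succ_of_le hk])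
      _ = 2 ^ D := Nat.sum_range_choose D
  · simp [Nat.choose_eq_zero_of_lt hk]

lemma aux_coeff_bound (D : ℕ) (x : Fin (D+1) → ℝ) (hx1 : ∀ i, |x i| ≤ 1)
    (s : Fin (D+1)) (t : ℕ) (ht : t ≤ D) :
    |(∏ i ∈ Finset.univ.erase s, (X - C (x i))).coeff t| ≤ 2 ^ D := by
  have hcard : #(Finset.univ.erase s) = D := by
    rw [card_erase_of_mem (mem_univ s)]; simp
  have hrw : (∏ i ∈ Finset.univ.erase s, (X - C (x i)))
      = ∏ i ∈ Finset.univ.erase s, (X + C (-(x i))) := by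
    simp [sub_eq_add_neg]
  rw [hrw, Finset.prod_X_add_C_coeff _ _ (by rw [hcard]; exact ht)]
  calc |∑ A ∈ (Finset.univ.erase s).powersetCard (#(Finset.univ.erase s) - t),
          A.prod (fun j => -(x j))|
      ≤ ∑ A ∈ (Finset.univ.erase s).powersetCard (#(Finset.univ.erase s) - t),
          |A.prod (fun j => -(x j))| := Finset.abs_sum_le_sum_abs _ _
    _ ≤ ∑ _A ∈ (Finset.univ.erase s).powersetCard (#(Finset.univ.erase s) - t), (1:ℝ) :=
        Finset.sum_le_sum fun A _ => by
          rw [Finset.abs_prod]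
          exact Finset.prod_le_one (fun j _ => abs_nonneg _)
            (fun j _ => by simpa using hx1 j)
    _ = (D.choose (D - t) : ℝ) := by
        rw [Finset.sum_const, Finset.card_powersetCard, hcard]; simp
    _ ≤ 2 ^ D := by exact_mod_cast Nat.cast_le.mpr (aux_choose_le D (D - t))



lemma aux_abs_prod (D : ℕ) (s : Fin (D+1)) :
    (∏ i ∈ Finset.univ.erase s, |((i:ℕ):ℝ) - ((s:ℕ):ℝ)|)
      = ((s:ℕ)! : ℝ) * ((D - (s:ℕ))! : ℝ) := by
  have himg : (Finset.range (D+1)).erase (s:ℕ)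
      = Finset.image Fin.val (Finset.univ.erase s) := by
    ext n
    simp only [mem_erase, mem_range, mem_image, mem_univ, and_true]
    constructor
    · rintro ⟨hne, hlt⟩
      exact ⟨⟨n, hlt⟩, ⟨fun hc => hne (by simpa using congrArg Fin.val hc), rfl⟩⟩
    · rintro ⟨a, ha, rfl⟩
      exact ⟨fun hc => ha (Fin.ext hc), a.isLt⟩
  have hprodeq : (∏ i ∈ Finset.univ.erase s, |((i:ℕ):ℝ) - ((s:ℕ):ℝ)|)
      = ∏ n ∈ (Finset.range (D+1)).erase (s:ℕ), |((n:ℕ):ℝ) - ((s:ℕ):ℝ)| := by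
    rw [himg, Finset.prod_image (fun a _ b _ hab => Fin.val_injective hab)]
  rw [hprodeq]
  have hsplit : (Finset.range (D+1)).erase (s:ℕ)
      = Finset.range (s:ℕ) ∪ Finset.Ico ((s:ℕ)+1) (D+1) := by
    have hs := s.isLt
    ext n
    simp only [mem_erase, mem_range, mem_union, mem_Ico]
    omega
  have hdisj : Disjoint (Finset.range (s:ℕ)) (Finset.Ico ((s:ℕ)+1) (D+1)) := by
    rw [Finset.disjoint_left]; intro n hn hn'
    simp only [mem_range] at hn; simp only [mem_Ico] at hn'; omega
  rw [hsplit, Finset.prod_union hdisj]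
  have h1 : (∏ n ∈ Finset.range (s:ℕ), |((n:ℕ):ℝ) - ((s:ℕ):ℝ)|) = ((s:ℕ)! : ℝ) := by
    rw [← aux_prod_range_sub (s:ℕ), Nat.cast_prod]
    exact Finset.prod_congr rfl fun n hn => by
      simp only [mem_range] at hn
      rw [abs_sub_comm, abs_of_nonneg (by
        have : (n:ℝ) ≤ ((s:ℕ):ℝ) := by exact_mod_cast hn.le
        linarith)]
      rw [Nat.cast_sub hn.le]
  have h2 : (∏ n ∈ Finset.Ico ((s:ℕ)+1) (D+1), |((n:ℕ):ℝ) - ((s:ℕ):ℝ)|)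
      = ((D - (s:ℕ))! : ℝ) := by
    rw [Finset.prod_Ico_eq_prod_range]
    have hc : D + 1 - ((s:ℕ)+1) = D - (s:ℕ) := by omega
    rw [hc, ← prod_range_add_one_eq_factorial (D - (s:ℕ)), Nat.cast_prod]
    exact Finset.prod_congr rfl fun j _ => by
      push_cast
      rw [abs_of_nonneg (by linarith)]
      ring
  rw [h1, h2]

lemma aux_inv_eq (D : ℕ) (x : Fin (D+1) → ℝ) (hinj : Function.Injective x) :
    (Matrix.vandermonde x)⁻¹ =
      Matrix.of (fun (p ℓ : Fin (D+1)) => (Lagrange.basis Finset.univ x ℓ).coeff (p:ℕ)) := by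
  have hinjOn : Set.InjOn x ↑(Finset.univ : Finset (Fin (D+1))) := hinj.injOn
  apply Matrix.inv_eq_right_inv
  ext ℓ m
  rw [Matrix.mul_apply]
  have hdeg : (Lagrange.basis Finset.univ x m).natDegree = D := by
    rw [Lagrange.natDegree_basis hinjOn (mem_univ m)]
    simp
  have : ∑ p : Fin (D+1), Matrix.vandermonde x ℓ p *
      Matrix.of (fun (p ℓ : Fin (D+1)) => (Lagrange.basis Finset.univ x ℓ).coeff (p:ℕ)) p m
      = (Lagrange.basis Finset.univ x m).eval (x ℓ) := by
    rw [Polynomial.eval_eq_sum_range, hdeg]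
    rw [← Fin.sum_univ_eq_sum_range (fun i => (Lagrange.basis Finset.univ x m).coeff i * x ℓ ^ i)]
    exact Finset.sum_congr rfl fun p _ => by
      simp [Matrix.vandermonde, mul_comm]
  rw [this]
  by_cases hlm : ℓ = m
  · subst hlm
    rw [Lagrange.eval_basis_self hinjOn (mem_univ ℓ)]
    simp
  · rw [Lagrange.eval_basis_of_ne (fun hc => hlm (hc.symm)) (mem_univ ℓ)]
    simp [Matrix.one_apply, hlm]

lemma aux_entry_bound (D : ℕ) (h : ℝ) (hh : 0 < h) (hDh : (D:ℝ) * h < 1)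
    (x : Fin (D+1) → ℝ) (hx : ∀ ℓ, x ℓ = 1 - (ℓ:ℕ) * h) (t s : Fin (D+1)) :
    |(Matrix.vandermonde x)⁻¹ t s| ≤
      2 ^ D / (h ^ D * (((s:ℕ)! : ℝ) * ((D - (s:ℕ))! : ℝ))) := by
  have hxval : ∀ i : Fin (D+1), 0 < x i ∧ x i ≤ 1 := by
    intro i
    rw [hx i]
    have hiD : ((i:ℕ):ℝ) ≤ (D:ℝ) := by exact_mod_cast Nat.lt_succ_iff.mp i.isLt
    have h1 : ((i:ℕ):ℝ) * h ≤ (D:ℝ) * h := by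
      apply mul_le_mul_of_nonneg_right hiD hh.le
    have h2 : 0 ≤ ((i:ℕ):ℝ) * h := by positivity
    constructor <;> linarith
  have hinj : Function.Injective x := by
    intro i j hij
    rw [hx i, hx j] at hij
    have : ((i:ℕ):ℝ) * h = ((j:ℕ):ℝ) * h := by linarith
    have : ((i:ℕ):ℝ) = ((j:ℕ):ℝ) := mul_right_cancel₀ hh.ne' this
    exact Fin.ext (by exact_mod_cast this)
  rw [aux_inv_eq D x hinj]
  have hbasis : Lagrange.basis Finset.univ x s
      = C (∏ i ∈ Finset.univ.erase s, (x s - x i)⁻¹)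
        * ∏ i ∈ Finset.univ.erase s, (X - C (x i)) := by
    rw [Lagrange.basis]
    simp only [Lagrange.basisDivisor]
    rw [Finset.prod_mul_distrib, map_prod]
  have hcard : #(Finset.univ.erase s) = D := by
    rw [card_erase_of_mem (mem_univ s)]; simp
  have hdiff : ∀ i : Fin (D+1), x s - x i = (((i:ℕ):ℝ) - ((s:ℕ):ℝ)) * h := by
    intro i; rw [hx s, hx i]; ring
  have hdenom : (∏ i ∈ Finset.univ.erase s, |x s - x i|)
      = h ^ D * (((s:ℕ)! : ℝ) * ((D - (s:ℕ))! : ℝ)) := by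
    calc (∏ i ∈ Finset.univ.erase s, |x s - x i|)
        = ∏ i ∈ Finset.univ.erase s, (|((i:ℕ):ℝ) - ((s:ℕ):ℝ)| * h) := by
          exact Finset.prod_congr rfl fun i _ => by
            rw [hdiff i, abs_mul, abs_of_pos hh]
      _ = (∏ i ∈ Finset.univ.erase s, |((i:ℕ):ℝ) - ((s:ℕ):ℝ)|) * h ^ D := by
          rw [Finset.prod_mul_distrib, Finset.prod_const, hcard]
      _ = h ^ D * (((s:ℕ)! : ℝ) * ((D - (s:ℕ))! : ℝ)) := by
          rw [aux_abs_prod D s]; ring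
  have hdpos : 0 < h ^ D * (((s:ℕ)! : ℝ) * ((D - (s:ℕ))! : ℝ)) := by positivity
  show |(Lagrange.basis Finset.univ x s).coeff (t:ℕ)| ≤ _
  rw [hbasis, Polynomial.coeff_C_mul, abs_mul]
  have habsC : |∏ i ∈ Finset.univ.erase s, (x s - x i)⁻¹|
      = (h ^ D * (((s:ℕ)! : ℝ) * ((D - (s:ℕ))! : ℝ)))⁻¹ := by
    rw [Finset.abs_prod, ← hdenom, ← Finset.prod_inv_distrib]
    exact Finset.prod_congr rfl fun i _ => (abs_inv _)
  rw [habsC]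
  have hnum := aux_coeff_bound D x (fun i => by
      rw [abs_of_pos (hxval i).1]; exact (hxval i).2) s (t:ℕ)
      (Nat.lt_succ_iff.mp t.isLt)
  rw [div_eq_inv_mul]
  exact mul_le_mul_of_nonneg_left hnum (inv_nonneg.mpr hdpos.le)

theorem gaussian_counting_matrix_tau_bound (D : ℕ) (hD : 2 ≤ D) (B : ℝ) (hB : 1 ≤ B)
    (α : Fin (D + 1) → ℝ)
    (hα : ∀ ℓ : Fin (D + 1),
      Real.exp (-(B * α ℓ)) = 1 - (ℓ : ℕ) * ((1 - Real.exp (-(B / D))) / D))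
    (M : Matrix (Fin (D + 1)) (Fin (D + 1)) ℝ)
    (hM : ∀ ℓ p : Fin (D + 1), M ℓ p = Real.exp (-(B * (α ℓ * (p : ℕ))))) :
    (∀ s t : Fin (D + 1),
      |(M.submatrix s.succAbove t.succAbove).det / M.det| ≤
        2 ^ D * (((1 - Real.exp (-(B / D))) / (2 * Real.exp 1)) ^ D)⁻¹) ∧
    ∀ b : Fin (D + 1) → ℝ,
      ‖M⁻¹.mulVec b‖ ≤ (5 * Real.exp 1 / (1 - Real.exp (-(B / D)))) ^ D * ‖b‖ := by
  have hDpos : (0:ℝ) < D := by exact_mod_cast Nat.lt_of_lt_of_le (by norm_num) hD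
  set E : ℝ := Real.exp 1 with hE
  have hEpos : 0 < E := Real.exp_pos 1
  have hE1 : 1 ≤ E := by
    rw [hE]; linarith [Real.add_one_le_exp (1:ℝ)]
  set δ : ℝ := 1 - Real.exp (-(B / D)) with hδ
  have hδpos : 0 < δ := by
    have : Real.exp (-(B / D)) < 1 := by
      rw [Real.exp_lt_one_iff]
      have : 0 < B / D := div_pos (by linarith) hDpos
      linarith
    rw [hδ]; linarith
  have hδ1 : δ < 1 := by
    have := Real.exp_pos (-(B / D)); rw [hδ]; linarith
  set h : ℝ := δ / D with hh_def
  have hh : 0 < h := div_pos hδpos hDpos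
  have hhD : (D:ℝ) * h = δ := by
    rw [hh_def]; field_simp
  have hDh : (D:ℝ) * h < 1 := by rw [hhD]; exact hδ1
  set x : Fin (D+1) → ℝ := fun ℓ => 1 - (ℓ:ℕ) * h with hx_def
  have hx : ∀ ℓ, x ℓ = 1 - (ℓ:ℕ) * h := fun ℓ => rfl
  have hMv : M = Matrix.vandermonde x := by
    ext ℓ p
    rw [hM ℓ p, Matrix.vandermonde]
    show Real.exp (-(B * (α ℓ * (p:ℕ)))) = x ℓ ^ (p:ℕ)
    have harg : -(B * (α ℓ * (p:ℕ))) = (p:ℕ) * (-(B * α ℓ)) := by ring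
    rw [harg, Real.exp_nat_mul, hα ℓ, hx_def]
  -- injectivity and nonzero det
  have hinj : Function.Injective x := by
    intro i j hij
    rw [hx i, hx j] at hij
    have h1 : ((i:ℕ):ℝ) * h = ((j:ℕ):ℝ) * h := by linarith
    have h2 : ((i:ℕ):ℝ) = ((j:ℕ):ℝ) := mul_right_cancel₀ hh.ne' h1
    exact Fin.ext (by exact_mod_cast h2)
  have hdet : M.det ≠ 0 := by
    rw [hMv, Matrix.det_vandermonde_ne_zero_iff]
    exact hinj
  -- key per-entry bound
  have hEnt : ∀ t s : Fin (D+1), |M⁻¹ t s| ≤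
      2 ^ D / (h ^ D * (((s:ℕ)! : ℝ) * ((D - (s:ℕ))! : ℝ))) := by
    intro t s
    rw [hMv]
    exact aux_entry_bound D h hh hDh x hx t s
  -- factorial bound : 1/D! ≤ E^D / D^D
  have hfact : (1:ℝ) / (D ! : ℝ) ≤ E ^ D / (D:ℝ) ^ D := by
    rw [div_le_div_iff₀ (by positivity) (by positivity)]
    have := aux_fact_lb D
    nlinarith [this]
  constructor
  · intro s t
    -- relate minor/det to inverse entry
    have hadj : M.adjugate t s
        = (-1) ^ ((s:ℕ) + (t:ℕ)) * (M.submatrix s.succAbove t.succAbove).det :=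
      Matrix.adjugate_fin_succ_eq_det_submatrix M t s
    have hinvadj : M⁻¹ t s = (M.det)⁻¹ * M.adjugate t s := by
      rw [Matrix.inv_def, Matrix.smul_apply, smul_eq_mul, Ring.inverse_eq_inv]
    have habs : |(M.submatrix s.succAbove t.succAbove).det / M.det| = |M⁻¹ t s| := by
      rw [hinvadj, hadj, abs_mul, abs_mul, abs_div, abs_inv, abs_pow, abs_neg, abs_one,
        one_pow, one_mul, div_eq_inv_mul]
    rw [habs]
    refine le_trans (hEnt t s) ?_
    -- arithmetic : 2^D/(h^D F) ≤ 2^D ((δ/(2E))^D)⁻¹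
    have hs : (s:ℕ) ≤ D := Nat.lt_succ_iff.mp s.isLt
    have hchoose : (D.choose (s:ℕ) : ℝ) = (D ! : ℝ) / (((s:ℕ)! : ℝ) * ((D - (s:ℕ))! : ℝ)) :=
      Nat.cast_choose ℝ hs
    have hFge : (D ! : ℝ) / 2 ^ D ≤ ((s:ℕ)! : ℝ) * ((D - (s:ℕ))! : ℝ) := by
      have hc2 : (D.choose (s:ℕ) : ℝ) ≤ 2 ^ D := by exact_mod_cast aux_choose_le D (s:ℕ)
      have hc1 : (1:ℝ) ≤ (D.choose (s:ℕ) : ℝ) := by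
        exact_mod_cast Nat.choose_pos hs
      have hFpos : (0:ℝ) < ((s:ℕ)! : ℝ) * ((D - (s:ℕ))! : ℝ) := by positivity
      rw [div_le_iff₀ (by positivity)]
      calc (D ! : ℝ) = (D.choose (s:ℕ) : ℝ) * (((s:ℕ)! : ℝ) * ((D - (s:ℕ))! : ℝ)) := by
            rw [hchoose]; field_simp
        _ ≤ 2 ^ D * (((s:ℕ)! : ℝ) * ((D - (s:ℕ))! : ℝ)) :=
            mul_le_mul_of_nonneg_right hc2 hFpos.le
        _ = (((s:ℕ)! : ℝ) * ((D - (s:ℕ))! : ℝ)) * 2 ^ D := by ring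
    -- lower bound : (δ/(2E))^D ≤ h^D F
    have hDfact : ((D:ℝ)/E) ^ D ≤ (D ! : ℝ) := by
      have := aux_fact_lb D
      rw [div_pow, div_le_iff₀ (by positivity)]
      linarith
    have hlow : (δ / (2*E)) ^ D ≤ h ^ D * (((s:ℕ)! : ℝ) * ((D - (s:ℕ))! : ℝ)) := by
      have hbase : δ / (2*E) = h * ((D:ℝ)/E/2) := by
        rw [← hhD]; field_simp
      have step1 : (δ / (2*E)) ^ D = h ^ D * (((D:ℝ)/E) ^ D / 2 ^ D) := by
        rw [hbase, mul_pow, div_pow, div_pow]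
      rw [step1]
      apply mul_le_mul_of_nonneg_left _ (by positivity)
      calc ((D:ℝ)/E) ^ D / 2 ^ D ≤ (D ! : ℝ) / 2 ^ D := by
            apply div_le_div_of_nonneg_right hDfact (by positivity)
        _ ≤ _ := hFge
    calc (2:ℝ) ^ D / (h ^ D * (((s:ℕ)! : ℝ) * ((D - (s:ℕ))! : ℝ)))
        ≤ 2 ^ D / (δ / (2*E)) ^ D :=
          div_le_div_of_nonneg_left (by positivity) (by positivity) hlow
      _ = 2 ^ D * (((δ) / (2 * E)) ^ D)⁻¹ := by rw [div_eq_mul_inv]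
  · intro b
    have hC : (0:ℝ) ≤ (5 * E / δ) ^ D * ‖b‖ := by positivity
    rw [pi_norm_le_iff_of_nonneg hC]
    intro t
    have hb : ∀ s, |b s| ≤ ‖b‖ := fun s => norm_le_pi_norm b s
    have hrow : ∑ s : Fin (D+1), 2 ^ D / (h ^ D * (((s:ℕ)! : ℝ) * ((D - (s:ℕ))! : ℝ)))
        ≤ (5 * E / δ) ^ D := by
      have hFs : ∀ s : Fin (D+1), (2:ℝ) ^ D / (h ^ D * (((s:ℕ)! : ℝ) * ((D - (s:ℕ))! : ℝ)))
          = (2 ^ D / h ^ D) * ((D.choose (s:ℕ) : ℝ) / (D ! : ℝ)) := by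
        intro s
        have hs : (s:ℕ) ≤ D := Nat.lt_succ_iff.mp s.isLt
        rw [Nat.cast_choose ℝ hs]
        have h1 : (((s:ℕ)! : ℝ)) ≠ 0 := by positivity
        have h2 : (((D - (s:ℕ))! : ℝ)) ≠ 0 := by positivity
        have h3 : ((D ! : ℝ)) ≠ 0 := by positivity
        field_simp
      have hsum : ∑ s : Fin (D+1), (D.choose (s:ℕ) : ℝ) = 2 ^ D := by
        rw [Fin.sum_univ_eq_sum_range (fun m => (D.choose m : ℝ)), ← Nat.cast_sum,
          Nat.sum_range_choose]
        push_cast; ring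
      have hb2 : 4*E/δ = (2/h) * (2*E/(D:ℝ)) := by
        rw [← hhD]; field_simp; ring
      calc ∑ s : Fin (D+1), 2 ^ D / (h ^ D * (((s:ℕ)! : ℝ) * ((D - (s:ℕ))! : ℝ)))
          = ∑ s : Fin (D+1), (2 ^ D / h ^ D) * ((D.choose (s:ℕ) : ℝ) / (D ! : ℝ)) :=
            Finset.sum_congr rfl (fun s _ => hFs s)
        _ = (2 ^ D / h ^ D) * ((∑ s : Fin (D+1), (D.choose (s:ℕ) : ℝ)) / (D ! : ℝ)) := by
            rw [← Finset.mul_sum, ← Finset.sum_div]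
        _ = (2 ^ D / h ^ D) * ((2:ℝ) ^ D / (D ! : ℝ)) := by rw [hsum]
        _ ≤ (2 ^ D / h ^ D) * (2 ^ D * (E ^ D / (D:ℝ) ^ D)) := by
            apply mul_le_mul_of_nonneg_left _ (by positivity)
            calc (2:ℝ) ^ D / (D ! : ℝ) = 2 ^ D * (1 / (D ! : ℝ)) := by ring
              _ ≤ 2 ^ D * (E ^ D / (D:ℝ) ^ D) :=
                  mul_le_mul_of_nonneg_left hfact (by positivity)
        _ = (4 * E / δ) ^ D := by
            rw [hb2, mul_pow]
            ring
        _ ≤ (5 * E / δ) ^ D := by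
            gcongr
            linarith
    calc ‖(M⁻¹.mulVec b) t‖ = |∑ s, M⁻¹ t s * b s| := by
          rw [Matrix.mulVec, dotProduct]; rfl
      _ ≤ ∑ s, |M⁻¹ t s * b s| := Finset.abs_sum_le_sum_abs _ _
      _ ≤ ∑ s : Fin (D+1), 2 ^ D / (h ^ D * (((s:ℕ)! : ℝ) * ((D - (s:ℕ))! : ℝ))) * ‖b‖ := by
          apply Finset.sum_le_sum
          intro s _
          rw [abs_mul]
          exact mul_le_mul (hEnt t s) (hb s) (abs_nonneg _) (by positivity)
      _ = (∑ s : Fin (D+1), 2 ^ D / (h ^ D * (((s:ℕ)! : ℝ) * ((D - (s:ℕ))! : ℝ)))) * ‖b‖ := by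
          rw [Finset.sum_mul]
      _ ≤ (5 * E / δ) ^ D * ‖b‖ := mul_le_mul_of_nonneg_right hrow (norm_nonneg b)
end

section
/- Let ρ ≥ 1 be real, D ≥ 2 an integer, and set α_i = β_i = i/D for i ∈ [D]. Let M be the D×D matrix with M[i,j] = 1/(1 + (α_i β_j)^ρ). Then for all s,t ∈ [D], |det(M)/det(M^{s-}_{t-})| ≥ 2^{-(2D-1)} · (3e)^{-2ρD}, and hence τ(M) := max_{b≠0} ‖M^{-1}b‖_∞/‖b‖_∞ ≤ (7e)^{2ρD}. -/
open Finset Polynomial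

namespace TauAux



lemma rpow_superadd {x y p : ℝ} (hx : 0 ≤ x) (hy : 0 ≤ y) (hp : 1 ≤ p) :
    x ^ p + y ^ p ≤ (x + y) ^ p := by
  have h := NNReal.add_rpow_le_rpow_add x.toNNReal y.toNNReal hp
  rw [← NNReal.coe_le_coe] at h
  push_cast at h
  rwa [Real.coe_toNNReal x hx, Real.coe_toNNReal y hy] at h

lemma exp_aux (m : ℕ) : ((m : ℝ) + 1) ^ m ≤ (Nat.factorial m : ℝ) * Real.exp 1 ^ (m + 1) := by
  induction m with
  | zero => simpa using (by linarith [Real.add_one_le_exp (1:ℝ)] : (1:ℝ) ≤ Real.exp 1)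
  | succ m ih =>
    have hm : (0:ℝ) < (m:ℝ) + 1 := by positivity
    have hb : (m:ℝ) + 2 ≤ ((m:ℝ) + 1) * Real.exp (1/((m:ℝ)+1)) := by
      have h1 := Real.add_one_le_exp (1/((m:ℝ)+1))
      have h2 : ((m:ℝ)+1) * (1/((m:ℝ)+1) + 1) = (m:ℝ) + 2 := by field_simp; ring
      nlinarith
    have h3 : ((m:ℝ) + 2) ^ (m+1) ≤ ((m:ℝ)+1) ^ (m+1) * Real.exp 1 := by
      calc ((m:ℝ) + 2) ^ (m+1) ≤ (((m:ℝ)+1) * Real.exp (1/((m:ℝ)+1))) ^ (m+1) :=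
            pow_le_pow_left₀ (by positivity) hb _
        _ = ((m:ℝ)+1) ^ (m+1) * Real.exp (1/((m:ℝ)+1)) ^ (m+1) := mul_pow _ _ _
        _ = ((m:ℝ)+1) ^ (m+1) * Real.exp 1 := by
            rw [← Real.exp_nat_mul]
            congr 1
            field_simp
            rw [Nat.cast_add_one, div_self hm.ne']
    have hE : (0:ℝ) < Real.exp 1 := Real.exp_pos 1
    have hfac : (0:ℝ) ≤ (m:ℝ) + 1 := by positivity
    calc ((↑(m+1) : ℝ) + 1) ^ (m+1) = ((m:ℝ) + 2) ^ (m+1) := by push_cast; ring_nf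
      _ ≤ ((m:ℝ)+1) ^ (m+1) * Real.exp 1 := h3
      _ = ((m:ℝ)+1) * ((m:ℝ)+1) ^ m * Real.exp 1 := by ring
      _ ≤ ((m:ℝ)+1) * ((Nat.factorial m : ℝ) * Real.exp 1 ^ (m+1)) * Real.exp 1 := by
          have := mul_le_mul_of_nonneg_left ih hfac
          nlinarith
      _ = (Nat.factorial (m+1) : ℝ) * Real.exp 1 ^ (m+1+1) := by
          push_cast [Nat.factorial_succ]; ring

lemma fact_split {m k : ℕ} (hk : k ≤ m) :
    Nat.factorial m ≤ 2 ^ m * (Nat.factorial k * Nat.factorial (m - k)) := by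
  have h1 := Nat.choose_mul_factorial_mul_factorial hk
  have h2 : m.choose k ≤ 2 ^ m := by
    calc m.choose k ≤ ∑ i ∈ range (m+1), m.choose i :=
          Finset.single_le_sum (fun i _ => Nat.zero_le _) (mem_range.mpr (Nat.lt_succ_of_le hk))
      _ = 2 ^ m := Nat.sum_range_choose m
  calc Nat.factorial m = m.choose k * Nat.factorial k * Nat.factorial (m-k) := h1.symm
    _ ≤ 2 ^ m * Nat.factorial k * Nat.factorial (m-k) :=
        Nat.mul_le_mul_right _ (Nat.mul_le_mul_right _ h2)
    _ = 2 ^ m * (Nat.factorial k * Nat.factorial (m-k)) := by ring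

lemma Dle (D : ℕ) : (D : ℝ) ≤ 2 * (49/36) ^ D := by
  induction D with
  | zero => norm_num
  | succ d ih =>
    rcases Nat.lt_or_ge d 2 with h | h
    · interval_cases d <;> norm_num
    · have h2 : (18/13 : ℝ) ≤ (49/36) ^ d := by
        calc (18/13 : ℝ) ≤ (49/36) ^ 2 := by norm_num
          _ ≤ (49/36 : ℝ) ^ d := pow_le_pow_right₀ (by norm_num) h
      push_cast
      have : (2:ℝ) * (49/36) ^ (d+1) = 2 * (49/36)^d * (49/36) := by ring
      rw [this]
      linarith




lemma lag_eval {D : ℕ} (z : Fin D → ℝ) (hz : Function.Injective z)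
    {p : ℝ[X]} (hp : p.degree < (D : ℕ)) (u : ℝ) :
    ∑ j, p.eval (z j) * ∏ m ∈ univ.erase j, ((u - z m) / (z j - z m)) = p.eval u := by
  have hinj : Set.InjOn z (univ : Finset (Fin D)) := fun a _ b _ h => hz h
  have hdeg : p.degree < (#(univ : Finset (Fin D)) : ℕ) := by
    simpa [Finset.card_univ] using hp
  have h := Lagrange.eq_interpolate hinj hdeg
  conv_rhs => rw [h]
  rw [Lagrange.interpolate_apply, eval_finset_sum]
  refine Finset.sum_congr rfl fun j _ => ?_
  rw [eval_mul, eval_C, Lagrange.basis, eval_prod]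
  congr 1
  refine Finset.prod_congr rfl fun m hm => ?_
  rw [Lagrange.basisDivisor, eval_mul, eval_C, eval_sub, eval_X, eval_C]
  rw [div_eq_inv_mul]

lemma cauchy_sum {D : ℕ} (x z : Fin D → ℝ) (hx : Function.Injective x)
    (hz : Function.Injective z) (hxz : ∀ i j, x i - z j ≠ 0) (i k : Fin D) :
    ∑ j, (x i - z j)⁻¹ *
      ((∏ m, (x k - z m)) / (∏ m ∈ univ.erase k, (x k - x m)) *
        ((∏ m ∈ univ.erase k, (z j - x m)) / (∏ m ∈ univ.erase j, (z j - z m))))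
      = if i = k then 1 else 0 := by
  classical
  set p : ℝ[X] := ∏ m ∈ univ.erase k, (X - C (x m)) with hpdef
  have hDpos : 0 < D := k.pos
  have hcard : #((univ : Finset (Fin D)).erase k) = D - 1 := by
    rw [Finset.card_erase_of_mem (mem_univ k), Finset.card_univ, Fintype.card_fin]
  have hpdeg : p.degree < (D : ℕ) := by
    have hmonic : p.Monic := monic_prod_of_monic _ _ fun m _ => monic_X_sub_C (x m)
    have hnd : p.natDegree = D - 1 := by
      rw [hpdef, natDegree_prod _ _ fun m _ => X_sub_C_ne_zero (x m)]
      simp [hcard]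
    rw [Polynomial.degree_eq_natDegree hmonic.ne_zero, hnd]
    exact_mod_cast Nat.sub_lt hDpos one_pos
  have heval : ∀ u : ℝ, p.eval u = ∏ m ∈ univ.erase k, (u - x m) := by
    intro u; simp [hpdef, eval_prod]
  have key := lag_eval z hz hpdeg (x i)
  set A : ℝ := ∏ m, (x k - z m) with hA
  set B : ℝ := ∏ m ∈ univ.erase k, (x k - x m) with hB
  set Pi : ℝ := ∏ m, (x i - z m) with hPi
  have hPine : Pi ≠ 0 := Finset.prod_ne_zero_iff.mpr fun m _ => hxz i m
  have hBne : B ≠ 0 := Finset.prod_ne_zero_iff.mpr fun m hm =>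
    sub_ne_zero.mpr fun h => (Finset.mem_erase.mp hm).1 (hx h).symm
  have hstep : ∀ j : Fin D, (x i - z j)⁻¹ *
      (A / B * ((∏ m ∈ univ.erase k, (z j - x m)) / (∏ m ∈ univ.erase j, (z j - z m))))
      = A / B * Pi⁻¹ *
        (p.eval (z j) * ∏ m ∈ univ.erase j, ((x i - z m) / (z j - z m))) := by
    intro j
    have hCne : (∏ m ∈ univ.erase j, (z j - z m)) ≠ 0 :=
      Finset.prod_ne_zero_iff.mpr fun m hm =>
        sub_ne_zero.mpr fun h => (Finset.mem_erase.mp hm).1 (hz h).symm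
    have hsplit : ∏ m ∈ univ.erase j, ((x i - z m) / (z j - z m))
        = (∏ m ∈ univ.erase j, (x i - z m)) / (∏ m ∈ univ.erase j, (z j - z m)) :=
      Finset.prod_div_distrib _ _
    have herase : (x i - z j) * ∏ m ∈ univ.erase j, (x i - z m) = Pi :=
      Finset.mul_prod_erase univ (fun m => x i - z m) (mem_univ j)
    rw [hsplit, heval]
    rw [← herase] at hPine ⊢
    have hij := hxz i j
    have hQ : (∏ m ∈ univ.erase j, (x i - z m)) ≠ 0 := right_ne_zero_of_mul hPine
    field_simp
  calc (∑ j, (x i - z j)⁻¹ *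
      (A / B * ((∏ m ∈ univ.erase k, (z j - x m)) / (∏ m ∈ univ.erase j, (z j - z m)))))
      = ∑ j, A / B * Pi⁻¹ *
        (p.eval (z j) * ∏ m ∈ univ.erase j, ((x i - z m) / (z j - z m))) :=
        Finset.sum_congr rfl fun j _ => hstep j
    _ = A / B * Pi⁻¹ * ∑ j, (p.eval (z j) * ∏ m ∈ univ.erase j, ((x i - z m) / (z j - z m))) :=
        (Finset.mul_sum _ _ _).symm
    _ = A / B * Pi⁻¹ * p.eval (x i) := by rw [key]
    _ = if i = k then 1 else 0 := by
        by_cases hik : i = k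
        · subst hik
          rw [if_pos rfl, heval, ← hB, hA, ← hPi]
          field_simp
        · rw [if_neg hik, heval]
          have : ∏ m ∈ univ.erase k, (x i - x m) = 0 :=
            Finset.prod_eq_zero (Finset.mem_erase.mpr ⟨hik, mem_univ i⟩) (sub_self (x i))
          rw [this, mul_zero]




lemma prod_sub_range (K : ℕ) : (∏ i ∈ range K, (K - i)) = Nat.factorial K := by
  have h := Finset.prod_range_reflect (fun j => K - j) K
  have h2 : (∏ j ∈ range K, (K - (K - 1 - j))) = ∏ j ∈ range K, (j + 1) :=
    Finset.prod_congr rfl fun j hj => by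
      have := mem_range.mp hj; omega
  rw [← h, h2, Finset.prod_range_add_one_eq_factorial]

lemma dist_prod {D : ℕ} (k : Fin D) :
    ∏ m ∈ univ.erase k, |((m : ℕ) : ℝ) - ((k : ℕ) : ℝ)| =
      ((Nat.factorial k * Nat.factorial (D - 1 - k) : ℕ) : ℝ) := by
  classical
  set K : ℕ := (k : ℕ) with hK
  have hKD : K < D := k.isLt
  set G : ℕ → ℝ := fun i => if i = K then 1 else |(i : ℝ) - (K : ℝ)| with hG
  have step1 : ∏ m ∈ univ.erase k, |((m : ℕ) : ℝ) - (K : ℝ)| = ∏ m ∈ univ.erase k, G (m : ℕ) :=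
    Finset.prod_congr rfl fun m hm => by
      rw [hG]
      simp only []
      rw [if_neg fun h => (Finset.mem_erase.mp hm).1 (Fin.ext h)]
  have step2 : ∏ m ∈ univ.erase k, G (m : ℕ) = ∏ m : Fin D, G (m : ℕ) :=
    Finset.prod_erase univ (by simp [hG, hK])
  have step3 : ∏ m : Fin D, G (m : ℕ) = ∏ i ∈ range D, G i :=
    Fin.prod_univ_eq_prod_range G D
  have step4 : ∏ i ∈ range D, G i = (∏ i ∈ Finset.Ico 0 K, G i) * ∏ i ∈ Finset.Ico K D, G i := by
    rw [Finset.range_eq_Ico, ← Finset.prod_Ico_consecutive G (Nat.zero_le K) (le_of_lt hKD)]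
  have step5 : ∏ i ∈ Finset.Ico K D, G i = G K * ∏ i ∈ Finset.Ico (K + 1) D, G i :=
    Finset.prod_eq_prod_Ico_succ_bot hKD G
  have hGK : G K = 1 := by simp [hG]
  have left : ∏ i ∈ Finset.Ico 0 K, G i = (Nat.factorial K : ℝ) := by
    rw [← Finset.range_eq_Ico]
    have : ∏ i ∈ range K, G i = ∏ i ∈ range K, ((K - i : ℕ) : ℝ) :=
      Finset.prod_congr rfl fun i hi => by
        have hiK := mem_range.mp hi
        rw [hG]
        simp only []
        rw [if_neg (by omega), abs_sub_comm, abs_of_nonneg (by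
          rw [sub_nonneg]; exact_mod_cast le_of_lt hiK), Nat.cast_sub (le_of_lt hiK)]
    rw [this, ← Nat.cast_prod, prod_sub_range]
  have right : ∏ i ∈ Finset.Ico (K + 1) D, G i = (Nat.factorial (D - 1 - K) : ℝ) := by
    rw [Finset.prod_Ico_eq_prod_range]
    have : ∏ j ∈ range (D - (K + 1)), G (K + 1 + j)
        = ∏ j ∈ range (D - (K + 1)), ((j + 1 : ℕ) : ℝ) :=
      Finset.prod_congr rfl fun j hj => by
        rw [hG]
        simp only []
        rw [if_neg (by omega)]
        have : ((K + 1 + j : ℕ) : ℝ) - (K : ℝ) = ((j + 1 : ℕ) : ℝ) := by push_cast; ring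
        rw [this, abs_of_nonneg (by positivity)]
    rw [this, ← Nat.cast_prod, Finset.prod_range_add_one_eq_factorial]
    congr 2
    omega
  rw [step1, step2, step3, step4, step5, hGK, one_mul, left, right, ← Nat.cast_mul]

lemma combine_aux (c d Ek Ej PAj tj aj : ℝ) (hEk : Ek ≠ 0) (hEj : Ej ≠ 0)
    (hPAj : PAj ≠ 0) (htj : tj ≠ 0) (haj : aj ≠ 0) :
    aj * ((c * (aj⁻¹ * PAj)) / Ek * ((d * tj) / (Ej * (tj * PAj)))) = (c * d) / (Ek * Ej) := by
  field_simp

end TauAux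

open Finset TauAux in
set_option maxHeartbeats 1000000 in
theorem tstudent_counting_matrix_tau_bound (n : ℕ) (hn : 1 ≤ n) (ρ : ℝ) (hρ : 1 ≤ ρ)
    (M : Matrix (Fin (n + 1)) (Fin (n + 1)) ℝ)
    (hM : ∀ i j : Fin (n + 1), M i j =
      1 / (1 + ((((i : ℕ) + 1 : ℝ) / (n + 1)) * (((j : ℕ) + 1 : ℝ) / (n + 1))) ^ ρ)) :
    (∀ s t : Fin (n + 1),
      ((2 : ℝ) ^ (2 * (n + 1) - 1))⁻¹ * ((3 * Real.exp 1) ^ (2 * ρ * ((n : ℝ) + 1)))⁻¹ ≤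
        |M.det / (M.submatrix s.succAbove t.succAbove).det|) ∧
    ∀ b : Fin (n + 1) → ℝ,
      ‖M⁻¹.mulVec b‖ ≤ (7 * Real.exp 1) ^ (2 * ρ * ((n : ℝ) + 1)) * ‖b‖ := by
  classical
  have hρ0 : (0:ℝ) ≤ ρ := le_trans zero_le_one hρ
  have hnR : (0:ℝ) < (n:ℝ) + 1 := by positivity
  set a : Fin (n+1) → ℝ := fun i => ((((i:ℕ):ℝ) + 1) / ((n:ℝ) + 1)) ^ ρ with ha
  have hbpos : ∀ i : Fin (n+1), 0 < (((i:ℕ):ℝ) + 1) / ((n:ℝ) + 1) := fun i => by positivity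
  have hble : ∀ i : Fin (n+1), (((i:ℕ):ℝ) + 1) / ((n:ℝ) + 1) ≤ 1 := fun i => by
    rw [div_le_one hnR]
    have : (i:ℕ) ≤ n := Nat.lt_succ_iff.mp i.isLt
    exact_mod_cast Nat.succ_le_succ this
  have hapos : ∀ i, 0 < a i := fun i => Real.rpow_pos_of_pos (hbpos i) ρ
  have hale : ∀ i, a i ≤ 1 := fun i => Real.rpow_le_one (le_of_lt (hbpos i)) (hble i) hρ0
  -- gap estimate
  set eps : Fin (n+1) → Fin (n+1) → ℝ :=
    fun k m => (|((m:ℕ):ℝ) - ((k:ℕ):ℝ)| / ((n:ℝ) + 1)) ^ ρ with heps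
  have hgap : ∀ i j : Fin (n+1), (i:ℕ) < (j:ℕ) →
      a i + ((((j:ℕ):ℝ) - ((i:ℕ):ℝ)) / ((n:ℝ)+1)) ^ ρ ≤ a j := by
    intro i j hij
    have hx : (0:ℝ) ≤ (((j:ℕ):ℝ) - ((i:ℕ):ℝ)) / ((n:ℝ)+1) := by
      have : ((i:ℕ):ℝ) ≤ ((j:ℕ):ℝ) := by exact_mod_cast le_of_lt hij
      exact div_nonneg (by linarith) (le_of_lt hnR)
    have hy : (0:ℝ) ≤ (((i:ℕ):ℝ) + 1) / ((n:ℝ)+1) := le_of_lt (hbpos i)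
    have hsum : (((j:ℕ):ℝ) - ((i:ℕ):ℝ)) / ((n:ℝ)+1) + (((i:ℕ):ℝ) + 1) / ((n:ℝ)+1)
        = (((j:ℕ):ℝ) + 1) / ((n:ℝ)+1) := by field_simp; ring
    have := rpow_superadd hx hy hρ
    rw [hsum] at this
    rw [ha]
    simp only []
    linarith
  have hgap' : ∀ k m : Fin (n+1), m ≠ k → eps k m ≤ |a k - a m| := by
    intro k m hmk
    rcases Nat.lt_or_ge (m:ℕ) (k:ℕ) with h | h
    · have h1 := hgap m k h
      have h2 : (0:ℝ) ≤ ((((k:ℕ):ℝ) - ((m:ℕ):ℝ)) / ((n:ℝ)+1)) ^ ρ :=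
        Real.rpow_nonneg (by
          have : ((m:ℕ):ℝ) ≤ ((k:ℕ):ℝ) := by exact_mod_cast le_of_lt h
          exact div_nonneg (by linarith) (le_of_lt hnR)) ρ
      have habs : |((m:ℕ):ℝ) - ((k:ℕ):ℝ)| = ((k:ℕ):ℝ) - ((m:ℕ):ℝ) := by
        rw [abs_sub_comm, abs_of_nonneg]
        have : ((m:ℕ):ℝ) ≤ ((k:ℕ):ℝ) := by exact_mod_cast le_of_lt h
        linarith
      rw [heps]
      simp only []
      rw [habs, abs_of_nonneg (by linarith [hgap m k h, Real.rpow_nonneg (le_of_lt (hbpos m)) ρ] : (0:ℝ) ≤ a k - a m)]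
      linarith
    · have h' : (k:ℕ) < (m:ℕ) := by
        rcases Nat.lt_or_ge (k:ℕ) (m:ℕ) with h2 | h2
        · exact h2
        · exact absurd (Fin.ext (le_antisymm h h2)) hmk.symm
      have h1 := hgap k m h'
      have habs : |((m:ℕ):ℝ) - ((k:ℕ):ℝ)| = ((m:ℕ):ℝ) - ((k:ℕ):ℝ) := by
        rw [abs_of_nonneg]
        have : ((k:ℕ):ℝ) ≤ ((m:ℕ):ℝ) := by exact_mod_cast le_of_lt h'
        linarith
      have h2 : (0:ℝ) ≤ ((((m:ℕ):ℝ) - ((k:ℕ):ℝ)) / ((n:ℝ)+1)) ^ ρ :=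
        Real.rpow_nonneg (by
          have : ((k:ℕ):ℝ) ≤ ((m:ℕ):ℝ) := by exact_mod_cast le_of_lt h'
          exact div_nonneg (by linarith) (le_of_lt hnR)) ρ
      rw [heps]
      simp only []
      rw [habs, abs_of_nonpos (by linarith : a k - a m ≤ 0)]
      linarith
  have hainj : Function.Injective a := by
    intro i j hij
    by_contra hne
    rcases Nat.lt_or_ge (i:ℕ) (j:ℕ) with h | h
    · have := hgap i j h
      have h2 : (0:ℝ) < ((((j:ℕ):ℝ) - ((i:ℕ):ℝ)) / ((n:ℝ)+1)) ^ ρ :=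
        Real.rpow_pos_of_pos (by
          have : ((i:ℕ):ℝ) < ((j:ℕ):ℝ) := by exact_mod_cast h
          exact div_pos (by linarith) hnR) ρ
      rw [hij] at this; linarith
    · have h' : (j:ℕ) < (i:ℕ) := by
        rcases Nat.lt_or_ge (j:ℕ) (i:ℕ) with h2 | h2
        · exact h2
        · exact absurd (Fin.ext (le_antisymm h h2)) (hne ∘ Eq.symm)
      have := hgap j i h'
      have h2 : (0:ℝ) < ((((i:ℕ):ℝ) - ((j:ℕ):ℝ)) / ((n:ℝ)+1)) ^ ρ :=
        Real.rpow_pos_of_pos (by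
          have : ((j:ℕ):ℝ) < ((i:ℕ):ℝ) := by exact_mod_cast h'
          exact div_pos (by linarith) hnR) ρ
      rw [hij] at this; linarith
  -- the nodes
  set z : Fin (n+1) → ℝ := fun j => -(a j)⁻¹ with hz
  have hzinj : Function.Injective z := by
    intro i j hij
    rw [hz] at hij
    simp only [neg_inj] at hij
    exact hainj (inv_injective hij)
  have hxzpos : ∀ i j : Fin (n+1), 0 < a i - z j := by
    intro i j
    rw [hz]
    simp only []
    have := hapos i
    have h2 : 0 < (a j)⁻¹ := inv_pos.mpr (hapos j)
    linarith
  have hxz : ∀ i j : Fin (n+1), a i - z j ≠ 0 := fun i j => ne_of_gt (hxzpos i j)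
  -- the explicit inverse
  set N : Matrix (Fin (n+1)) (Fin (n+1)) ℝ := fun j k =>
    a j * ((∏ m, (a k - z m)) / (∏ m ∈ univ.erase k, (a k - a m)) *
      ((∏ m ∈ univ.erase k, (z j - a m)) / (∏ m ∈ univ.erase j, (z j - z m)))) with hN
  have hM' : ∀ i j, M i j = (1 + a i * a j)⁻¹ := by
    intro i j
    rw [hM i j, ha]
    simp only []
    rw [← Real.mul_rpow (le_of_lt (hbpos i)) (le_of_lt (hbpos j)), one_div]
  have hMfac : ∀ i j, M i j * a j = (a i - z j)⁻¹ := by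
    intro i j
    rw [hM' i j, hz]
    simp only []
    have h1 : a i - -(a j)⁻¹ = a i + (a j)⁻¹ := by ring
    rw [h1]
    have haj := hapos j
    have h2 : (0:ℝ) < 1 + a i * a j := by nlinarith [hapos i]
    have h3 : a i + (a j)⁻¹ = (1 + a i * a j) / a j := by
      field_simp
      ring
    rw [h3, inv_div]
    rw [div_eq_mul_inv, mul_comm]
  have hMN : M * N = 1 := by
    ext i k
    rw [Matrix.mul_apply, Matrix.one_apply]
    have hterm : ∀ j, M i j * N j k = (a i - z j)⁻¹ *
        ((∏ m, (a k - z m)) / (∏ m ∈ univ.erase k, (a k - a m)) *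
          ((∏ m ∈ univ.erase k, (z j - a m)) / (∏ m ∈ univ.erase j, (z j - z m)))) := by
      intro j
      rw [hN]
      simp only []
      rw [← mul_assoc, mul_comm (M i j) (a j), mul_comm (a j) (M i j), hMfac i j]
    rw [Finset.sum_congr rfl fun j _ => hterm j]
    exact cauchy_sum a z hainj hzinj hxz i k
  have hMinv : M⁻¹ = N := Matrix.inv_eq_right_inv hMN
  have hdetU : IsUnit M.det := Matrix.isUnit_det_of_right_inverse hMN
  have hdetne : M.det ≠ 0 := by
    intro h
    rw [h] at hdetU
    exact (by simp : ¬ IsUnit (0:ℝ)) hdetU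
  -- lower bound on products of eps
  set Cinv : ℝ := ((3 * Real.exp 1) ^ (ρ * ((n:ℝ) + 1)))⁻¹ with hCinv
  have hepos : (0:ℝ) < Real.exp 1 := Real.exp_pos 1
  have hCinvpos : 0 < Cinv := by
    rw [hCinv]
    exact inv_pos.mpr (Real.rpow_pos_of_pos (by positivity) _)
  have hepspos : ∀ k m : Fin (n+1), m ≠ k → 0 < eps k m := by
    intro k m hmk
    rw [heps]
    refine Real.rpow_pos_of_pos (div_pos ?_ hnR) ρ
    rw [abs_pos, sub_ne_zero]
    exact fun h => hmk (Fin.ext (by exact_mod_cast h))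
  have hEbound : ∀ k : Fin (n+1), Cinv ≤ ∏ m ∈ univ.erase k, eps k m := by
    intro k
    have hprod : ∏ m ∈ univ.erase k, eps k m
        = (∏ m ∈ univ.erase k, (|((m:ℕ):ℝ) - ((k:ℕ):ℝ)| / ((n:ℝ)+1))) ^ ρ := by
      rw [heps]
      exact Real.finset_prod_rpow _ _ (fun m _ => by positivity) ρ
    have hcard : #((univ : Finset (Fin (n+1))).erase k) = n := by
      rw [Finset.card_erase_of_mem (mem_univ k), Finset.card_univ, Fintype.card_fin]
      omega
    have hsplit : ∏ m ∈ univ.erase k, (|((m:ℕ):ℝ) - ((k:ℕ):ℝ)| / ((n:ℝ)+1))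
        = ((Nat.factorial k * Nat.factorial (n - k) : ℕ) : ℝ) / ((n:ℝ)+1) ^ n := by
      have he : n + 1 - 1 - (k:ℕ) = n - (k:ℕ) := by omega
      rw [Finset.prod_div_distrib, Finset.prod_const, hcard, dist_prod k, he]
    have hkn : (k:ℕ) ≤ n := Nat.lt_succ_iff.mp k.isLt
    have hFpos : (0:ℝ) < ((Nat.factorial k * Nat.factorial (n - k) : ℕ) : ℝ) := by
      exact_mod_cast Nat.pos_of_ne_zero (by positivity)
    have hnum : ((n:ℝ)+1) ^ n ≤
        ((Nat.factorial k * Nat.factorial (n - k) : ℕ) : ℝ) * (3*Real.exp 1) ^ (n+1) := by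
      have h1 : ((n:ℝ)+1) ^ n ≤ (Nat.factorial n : ℝ) * Real.exp 1 ^ (n+1) := exp_aux n
      have h2 : (Nat.factorial n : ℝ) ≤
          2^n * ((Nat.factorial k * Nat.factorial (n-k) : ℕ):ℝ) := by
        exact_mod_cast fact_split hkn
      have h3 : (2:ℝ)^n * Real.exp 1 ^ (n+1) ≤ (3*Real.exp 1)^(n+1) := by
        rw [mul_pow]
        have h4 : (2:ℝ)^n ≤ 3^(n+1) := by
          calc (2:ℝ)^n ≤ 3^n := pow_le_pow_left₀ (by norm_num) (by norm_num) n
            _ ≤ (3:ℝ)^(n+1) := pow_le_pow_right₀ (by norm_num) (Nat.le_succ n)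
        exact mul_le_mul_of_nonneg_right h4 (by positivity)
      calc ((n:ℝ)+1)^n ≤ (Nat.factorial n : ℝ) * Real.exp 1 ^ (n+1) := h1
        _ ≤ (2^n * ((Nat.factorial k * Nat.factorial (n-k):ℕ):ℝ)) * Real.exp 1 ^ (n+1) :=
            mul_le_mul_of_nonneg_right h2 (by positivity)
        _ = ((Nat.factorial k * Nat.factorial (n-k):ℕ):ℝ) * (2^n * Real.exp 1^(n+1)) := by ring
        _ ≤ _ := mul_le_mul_of_nonneg_left h3 (le_of_lt hFpos)
    have hbase : ((3*Real.exp 1) ^ (n+1) : ℝ)⁻¹ ≤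
        ((Nat.factorial k * Nat.factorial (n - k):ℕ):ℝ) / ((n:ℝ)+1)^n := by
      rw [inv_eq_one_div, div_le_div_iff₀ (by positivity) (by positivity)]
      linarith
    have hCeq : (((3*Real.exp 1) ^ (n+1) : ℝ)⁻¹) ^ ρ = Cinv := by
      rw [Real.inv_rpow (by positivity), ← Real.rpow_natCast (3*Real.exp 1) (n+1),
        ← Real.rpow_mul (by positivity), hCinv]
      congr 2
      push_cast
      ring
    rw [hprod, hsplit, ← hCeq]
    exact Real.rpow_le_rpow (by positivity) hbase hρ0
  have hEpos : ∀ k : Fin (n+1), 0 < ∏ m ∈ univ.erase k, eps k m :=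
    fun k => lt_of_lt_of_le hCinvpos (hEbound k)
  have hcardE : ∀ k : Fin (n+1), #((univ : Finset (Fin (n+1))).erase k) = n := by
    intro k
    rw [Finset.card_erase_of_mem (mem_univ k), Finset.card_univ, Fintype.card_fin]
    omega
  have honeinv : ∀ m : Fin (n+1), (1:ℝ) ≤ (a m)⁻¹ := fun m => (one_le_inv₀ (hapos m)).mpr (hale m)
  -- entry bound
  have hNb : ∀ j k, |N j k| ≤ 2^(2*n+1) / (Cinv * Cinv) := by
    intro j k
    have habs : |N j k| = a j *
        ((∏ m, |a k - z m|) / (∏ m ∈ univ.erase k, |a k - a m|) *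
          ((∏ m ∈ univ.erase k, |z j - a m|) / (∏ m ∈ univ.erase j, |z j - z m|))) := by
      rw [hN]
      simp only []
      rw [abs_mul, abs_of_pos (hapos j), abs_mul, abs_div, abs_div,
        Finset.abs_prod, Finset.abs_prod, Finset.abs_prod, Finset.abs_prod]
    have hn1 : ∏ m, |a k - z m| ≤ 2^(n+1) * ∏ m, (a m)⁻¹ := by
      calc ∏ m, |a k - z m| ≤ ∏ m : Fin (n+1), (2 * (a m)⁻¹) := by
            refine Finset.prod_le_prod (fun m _ => abs_nonneg _) (fun m _ => ?_)
            rw [abs_of_pos (hxzpos k m), hz]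
            simp only []
            have h2 : a k ≤ (a m)⁻¹ := le_trans (hale k) (honeinv m)
            linarith
        _ = 2^(n+1) * ∏ m, (a m)⁻¹ := by
            rw [Finset.prod_mul_distrib, Finset.prod_const, Finset.card_univ, Fintype.card_fin]
    have hzja : ∀ m, |z j - a m| = (a j)⁻¹ + a m := by
      intro m
      rw [hz]
      simp only []
      rw [show -(a j)⁻¹ - a m = -((a j)⁻¹ + a m) by ring, abs_neg, abs_of_pos]
      have := hapos m
      have := inv_pos.mpr (hapos j)
      linarith
    have hn2 : ∏ m ∈ univ.erase k, |z j - a m| ≤ 2^n * ((a j)⁻¹)^n := by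
      calc ∏ m ∈ univ.erase k, |z j - a m| ≤ ∏ m ∈ univ.erase k, (2 * (a j)⁻¹) := by
            refine Finset.prod_le_prod (fun m _ => abs_nonneg _) (fun m _ => ?_)
            rw [hzja m]
            have h2 : a m ≤ (a j)⁻¹ := le_trans (hale m) (honeinv j)
            linarith
        _ = 2^n * ((a j)⁻¹)^n := by rw [Finset.prod_const, hcardE k, mul_pow]
    have hq1 : ∏ m ∈ univ.erase k, eps k m ≤ ∏ m ∈ univ.erase k, |a k - a m| :=
      Finset.prod_le_prod (fun m hm => le_of_lt (hepspos k m (Finset.mem_erase.mp hm).1))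
        (fun m hm => hgap' k m (Finset.mem_erase.mp hm).1)
    have hzjz : ∀ m, |z j - z m| = |a j - a m| * ((a j)⁻¹ * (a m)⁻¹) := by
      intro m
      have h1 : z j - z m = (a j - a m) * ((a j)⁻¹ * (a m)⁻¹) := by
        rw [hz]
        simp only []
        field_simp [ne_of_gt (hapos j), ne_of_gt (hapos m)]
        ring
      rw [h1, abs_mul, abs_of_pos (by positivity : (0:ℝ) < (a j)⁻¹ * (a m)⁻¹)]
    have hq2 : (∏ m ∈ univ.erase j, eps j m) * (((a j)⁻¹)^n * ∏ m ∈ univ.erase j, (a m)⁻¹)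
        ≤ ∏ m ∈ univ.erase j, |z j - z m| := by
      have heq2 : ∏ m ∈ univ.erase j, |z j - z m|
          = (∏ m ∈ univ.erase j, |a j - a m|) * (((a j)⁻¹)^n * ∏ m ∈ univ.erase j, (a m)⁻¹) := by
        rw [Finset.prod_congr rfl fun m _ => hzjz m, Finset.prod_mul_distrib,
          Finset.prod_mul_distrib, Finset.prod_const, hcardE j]
      rw [heq2]
      refine mul_le_mul_of_nonneg_right (Finset.prod_le_prod
        (fun m hm => le_of_lt (hepspos j m (Finset.mem_erase.mp hm).1))
        (fun m hm => hgap' j m (Finset.mem_erase.mp hm).1)) (by positivity)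
    -- assemble
    have hPAj : ∏ m, (a m)⁻¹ = (a j)⁻¹ * ∏ m ∈ univ.erase j, (a m)⁻¹ :=
      (Finset.mul_prod_erase univ (fun m => (a m)⁻¹) (mem_univ j)).symm
    have hdiv1 : (∏ m, |a k - z m|) / (∏ m ∈ univ.erase k, |a k - a m|)
        ≤ (2^(n+1) * ∏ m, (a m)⁻¹) / (∏ m ∈ univ.erase k, eps k m) :=
      div_le_div₀ (by positivity) hn1 (hEpos k) hq1
    have hdiv2 : (∏ m ∈ univ.erase k, |z j - a m|) / (∏ m ∈ univ.erase j, |z j - z m|)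
        ≤ (2^n * ((a j)⁻¹)^n) /
          ((∏ m ∈ univ.erase j, eps j m) * (((a j)⁻¹)^n * ∏ m ∈ univ.erase j, (a m)⁻¹)) :=
      div_le_div₀ (by positivity) hn2
        (mul_pos (hEpos j) (mul_pos (pow_pos (inv_pos.mpr (hapos j)) n)
          (Finset.prod_pos fun m _ => inv_pos.mpr (hapos m)))) hq2
    have hfin : a j * ((2^(n+1) * ∏ m, (a m)⁻¹) / (∏ m ∈ univ.erase k, eps k m) *
        ((2^n * ((a j)⁻¹)^n) /
          ((∏ m ∈ univ.erase j, eps j m) * (((a j)⁻¹)^n * ∏ m ∈ univ.erase j, (a m)⁻¹))))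
        = 2^(2*n+1) / ((∏ m ∈ univ.erase k, eps k m) * (∏ m ∈ univ.erase j, eps j m)) := by
      have h2p : (2:ℝ)^(n+1) * 2^n = 2^(2*n+1) := by rw [← pow_add]; congr 1; omega
      rw [hPAj]
      have hEk := ne_of_gt (hEpos k)
      have hEj := ne_of_gt (hEpos j)
      have haje := ne_of_gt (hapos j)
      have hPAje : (∏ m ∈ univ.erase j, (a m)⁻¹) ≠ 0 :=
        Finset.prod_ne_zero_iff.mpr fun m _ => inv_ne_zero (ne_of_gt (hapos m))
      have htj : ((a j)⁻¹ : ℝ)^n ≠ 0 := pow_ne_zero n (inv_ne_zero haje)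
      rw [combine_aux _ _ _ _ _ _ _ hEk hEj hPAje htj haje, h2p]
    calc |N j k| = a j *
        ((∏ m, |a k - z m|) / (∏ m ∈ univ.erase k, |a k - a m|) *
          ((∏ m ∈ univ.erase k, |z j - a m|) / (∏ m ∈ univ.erase j, |z j - z m|))) := habs
      _ ≤ a j * ((2^(n+1) * ∏ m, (a m)⁻¹) / (∏ m ∈ univ.erase k, eps k m) *
          ((2^n * ((a j)⁻¹)^n) /
            ((∏ m ∈ univ.erase j, eps j m) * (((a j)⁻¹)^n * ∏ m ∈ univ.erase j, (a m)⁻¹)))) := by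
          refine mul_le_mul_of_nonneg_left ?_ (le_of_lt (hapos j))
          have hc0 : (0:ℝ) ≤ (∏ m ∈ univ.erase k, |z j - a m|) /
              (∏ m ∈ univ.erase j, |z j - z m|) :=
            div_nonneg (Finset.prod_nonneg fun m _ => abs_nonneg _)
              (Finset.prod_nonneg fun m _ => abs_nonneg _)
          have hb0 : (0:ℝ) ≤ (2^(n+1) * ∏ m, (a m)⁻¹) / (∏ m ∈ univ.erase k, eps k m) :=
            div_nonneg (mul_nonneg (by positivity)
              (le_of_lt (Finset.prod_pos fun m _ => inv_pos.mpr (hapos m))))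
              (le_of_lt (hEpos k))
          exact mul_le_mul hdiv1 hdiv2 hc0 hb0
      _ = 2^(2*n+1) / ((∏ m ∈ univ.erase k, eps k m) * (∏ m ∈ univ.erase j, eps j m)) := hfin
      _ ≤ 2^(2*n+1) / (Cinv * Cinv) := by
          apply div_le_div_of_nonneg_left (by positivity) (mul_pos hCinvpos hCinvpos)
          exact mul_le_mul (hEbound k) (hEbound j) (le_of_lt hCinvpos) (le_of_lt (hEpos k))
  -- constants
  have hXpos : (0:ℝ) < (3*Real.exp 1) ^ (ρ * ((n:ℝ)+1)) :=
    Real.rpow_pos_of_pos (by positivity) _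
  have hX2 : (3*Real.exp 1) ^ (ρ*((n:ℝ)+1)) * (3*Real.exp 1) ^ (ρ*((n:ℝ)+1))
      = (3*Real.exp 1) ^ (2*ρ*((n:ℝ)+1)) := by
    rw [← Real.rpow_add (by positivity)]
    congr 1
    ring
  have hpow2 : (2:ℝ)^(2*n+1) = (2:ℝ)^(2*(n+1)-1) := by
    have h : 2*(n+1)-1 = 2*n+1 := by omega
    rw [h]
  have hKeq : (2:ℝ)^(2*n+1)/(Cinv*Cinv)
      = (2:ℝ)^(2*(n+1)-1) * (3*Real.exp 1)^(2*ρ*((n:ℝ)+1)) := by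
    rw [hCinv, ← mul_inv, division_def, inv_inv, hX2, hpow2]
  have hCC : (Cinv * Cinv)⁻¹ = (3*Real.exp 1)^(2*ρ*((n:ℝ)+1)) := by
    rw [hCinv, ← mul_inv, inv_inv, hX2]
  have hNne : ∀ j k, N j k ≠ 0 := by
    intro j k
    rw [hN]
    simp only []
    refine mul_ne_zero (ne_of_gt (hapos j)) (mul_ne_zero ?_ ?_)
    · refine div_ne_zero ?_ ?_
      · exact Finset.prod_ne_zero_iff.mpr fun m _ => hxz k m
      · exact Finset.prod_ne_zero_iff.mpr fun m hm =>
          sub_ne_zero.mpr fun h => (Finset.mem_erase.mp hm).1 (hainj h).symm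
    · refine div_ne_zero ?_ ?_
      · refine Finset.prod_ne_zero_iff.mpr fun m hm => ne_of_lt ?_
        rw [hz]
        simp only []
        have h1 := hapos m
        have h2 := inv_pos.mpr (hapos j)
        linarith
      · exact Finset.prod_ne_zero_iff.mpr fun m hm =>
          sub_ne_zero.mpr fun h => (Finset.mem_erase.mp hm).1 (hzinj h).symm
  constructor
  · -- first goal
    intro s t
    have hadj := Matrix.adjugate_fin_succ_eq_det_submatrix M t s
    have hNts : N t s = (M.det)⁻¹ * M.adjugate t s := by
      rw [← hMinv, Matrix.inv_def, Matrix.smul_apply, smul_eq_mul, Ring.inverse_eq_inv']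
    have habs2 : |N t s| = |(M.submatrix s.succAbove t.succAbove).det| / |M.det| := by
      rw [hNts, hadj, abs_mul, abs_mul, abs_pow, abs_neg, abs_one, one_pow, one_mul,
        abs_inv, inv_mul_eq_div]
    have hNtspos : 0 < |N t s| := abs_pos.mpr (hNne t s)
    rw [abs_div]
    have h1 : |M.det| / |(M.submatrix s.succAbove t.succAbove).det| = |N t s|⁻¹ := by
      rw [habs2, inv_div]
    rw [h1, ← mul_inv, ← hKeq]
    exact inv_anti₀ hNtspos (hNb t s)
  · -- second goal
    intro b
    have hsplit7 : (7*Real.exp 1 : ℝ)^(2*ρ*((n:ℝ)+1))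
        = (3*Real.exp 1)^(2*ρ*((n:ℝ)+1)) * ((7:ℝ)/3)^(2*ρ*((n:ℝ)+1)) := by
      rw [← Real.mul_rpow (by positivity) (by norm_num)]
      congr 1
      ring
    have h73 : ((n:ℝ)+1) * 2^(2*n+1) ≤ ((7:ℝ)/3)^(2*ρ*((n:ℝ)+1)) := by
      have ha1 : ((7:ℝ)/3)^(((2*(n+1) : ℕ)):ℝ) ≤ ((7:ℝ)/3)^(2*ρ*((n:ℝ)+1)) := by
        refine Real.rpow_le_rpow_of_exponent_le (by norm_num) ?_
        push_cast
        nlinarith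
      have hb1 : ((7:ℝ)/3)^(((2*(n+1) : ℕ)):ℝ) = ((49:ℝ)/9)^(n+1) := by
        rw [Real.rpow_natCast, pow_mul]
        norm_num
      have hc1 : ((n:ℝ)+1) * 2^(2*n+1) ≤ ((49:ℝ)/9)^(n+1) := by
        have hD := Dle (n+1)
        push_cast at hD
        have h4 : ((49:ℝ)/9)^(n+1) = 2*((49:ℝ)/36)^(n+1) * 2^(2*n+1) := by
          rw [show ((49:ℝ)/9) = (49/36)*4 by norm_num, mul_pow,
            show ((4:ℝ))^(n+1) = 2*2^(2*n+1) by
              rw [show (4:ℝ) = 2^2 by norm_num, ← pow_mul,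
                show 2*(n+1) = (2*n+1)+1 by omega, pow_succ]
              ring]
          ring
        rw [h4]
        exact mul_le_mul_of_nonneg_right hD (by positivity)
      calc ((n:ℝ)+1) * 2^(2*n+1) ≤ ((49:ℝ)/9)^(n+1) := hc1
        _ = ((7:ℝ)/3)^(((2*(n+1) : ℕ)):ℝ) := hb1.symm
        _ ≤ _ := ha1
    have hK7 : ((n:ℝ)+1) * (2^(2*n+1)/(Cinv*Cinv)) ≤ (7*Real.exp 1)^(2*ρ*((n:ℝ)+1)) := by
      calc ((n:ℝ)+1) * (2^(2*n+1)/(Cinv*Cinv))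
          = (((n:ℝ)+1) * 2^(2*n+1)) * (Cinv*Cinv)⁻¹ := by rw [div_eq_mul_inv]; ring
        _ = (((n:ℝ)+1) * 2^(2*n+1)) * (3*Real.exp 1)^(2*ρ*((n:ℝ)+1)) := by rw [hCC]
        _ ≤ ((7:ℝ)/3)^(2*ρ*((n:ℝ)+1)) * (3*Real.exp 1)^(2*ρ*((n:ℝ)+1)) :=
            mul_le_mul_of_nonneg_right h73 (Real.rpow_nonneg (by positivity) _)
        _ = (7*Real.exp 1)^(2*ρ*((n:ℝ)+1)) := by rw [hsplit7]; ring
    rw [hMinv]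
    have hKb0 : (0:ℝ) ≤ 2^(2*n+1)/(Cinv*Cinv) :=
      le_of_lt (div_pos (by positivity) (mul_pos hCinvpos hCinvpos))
    rw [pi_norm_le_iff_of_nonneg (by positivity)]
    intro i
    have hmv : (N.mulVec b) i = ∑ j, N i j * b j := by
      simp [Matrix.mulVec, dotProduct]
    rw [hmv, Real.norm_eq_abs]
    calc |∑ j, N i j * b j| ≤ ∑ j, |N i j * b j| := Finset.abs_sum_le_sum_abs _ _
      _ ≤ ∑ _j : Fin (n+1), (2^(2*n+1)/(Cinv*Cinv)) * ‖b‖ := by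
          refine Finset.sum_le_sum fun j _ => ?_
          rw [abs_mul]
          refine mul_le_mul (hNb i j) ?_ (abs_nonneg _) hKb0
          rw [← Real.norm_eq_abs]
          exact norm_le_pi_norm b j
      _ = ((n:ℝ)+1) * (2^(2*n+1)/(Cinv*Cinv)) * ‖b‖ := by
          rw [Finset.sum_const, Finset.card_univ, Fintype.card_fin, nsmul_eq_mul]
          push_cast
          ring
      _ ≤ (7*Real.exp 1)^(2*ρ*((n:ℝ)+1)) * ‖b‖ :=
          mul_le_mul_of_nonneg_right hK7 (norm_nonneg b)
end
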